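/- arXiv:1712.04746 — 2 statements merged into one kernel-verified Lean document; each statement's English description precedes it below -/
import Mathlib

section
/- If A and B are Lie algebras over a field F, then the Schur multiplier of their direct sum satisfies M(A ⊕ B) ≅ M(A) ⊕ M(B) ⊕ (A^{ab} ⊗ B^{ab}), where A^{ab} = A/[A,A]. -/
open LieAlgebra Matrix Module


open LieAlgebra

section ProdLie
variable {L M : Type*}

instance prodLieRing [LieRing L] [LieRing M] : LieRing (L × M) where
  bracket x y := (⁅x.1, y.1⁆, ⁅x.2, y.2⁆)
  add_lie x y z := by ext <;> simp [add_lie]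
  lie_add x y z := by ext <;> simp [lie_add]
  lie_self x := by ext <;> simp
  leibniz_lie x y z := by ext <;> simp

@[simp] theorem prod_bracket_fst [LieRing L] [LieRing M] (x y : L × M) :
    ⁅x, y⁆.1 = ⁅x.1, y.1⁆ := rfl
@[simp] theorem prod_bracket_snd [LieRing L] [LieRing M] (x y : L × M) :
    ⁅x, y⁆.2 = ⁅x.2, y.2⁆ := rfl

instance prodLieAlgebra (F : Type*) [CommRing F] [LieRing L] [LieRing M]
    [LieAlgebra F L] [LieAlgebra F M] : LieAlgebra F (L × M) where
  lie_smul t x y := by ext <;> simp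
end ProdLie

section AbL
variable (F : Type*) [Field F]

/-- The abelian Lie algebra of dimension `k` over `F`. -/
def AbLie (k : ℕ) : Type _ := Fin k → F

instance (k : ℕ) : AddCommGroup (AbLie F k) := Pi.addCommGroup
instance (k : ℕ) : Module F (AbLie F k) := Pi.module _ _ _

instance (k : ℕ) : LieRing (AbLie F k) where
  bracket _ _ := 0
  add_lie _ _ _ := (zero_add 0).symm
  lie_add _ _ _ := (zero_add 0).symm
  lie_self _ := rfl
  leibniz_lie _ _ _ := (zero_add 0).symm

instance (k : ℕ) : LieAlgebra F (AbLie F k) where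
  lie_smul t x y := (smul_zero t).symm

instance (k : ℕ) : FiniteDimensional F (AbLie F k) :=
  (inferInstance : FiniteDimensional F (Fin k → F))

instance (k : ℕ) : IsLieAbelian (AbLie F k) := ⟨fun _ _ => rfl⟩
end AbL
open Matrix
section Heis
variable (F : Type*) [Field F]

/-- The Heisenberg Lie algebra `H(m)` of dimension `2m+1`. -/
def Heis (m : ℕ) : Type _ := (Fin m → F) × (Fin m → F) × F

instance (m : ℕ) : AddCommGroup (Heis F m) := Prod.instAddCommGroup
instance (m : ℕ) : Module F (Heis F m) := Prod.instModule

instance (m : ℕ) : LieRing (Heis F m) where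
  bracket x y := (0, 0, x.1 ⬝ᵥ y.2.1 - y.1 ⬝ᵥ x.2.1)
  add_lie x y z := by
    refine Prod.ext ?_ (Prod.ext ?_ ?_)
    · show (0 : Fin m → F) = 0 + 0; rw [add_zero]
    · show (0 : Fin m → F) = 0 + 0; rw [add_zero]
    · show (x.1 + y.1) ⬝ᵥ z.2.1 - z.1 ⬝ᵥ (x.2.1 + y.2.1) =
        (x.1 ⬝ᵥ z.2.1 - z.1 ⬝ᵥ x.2.1) + (y.1 ⬝ᵥ z.2.1 - z.1 ⬝ᵥ y.2.1)
      rw [add_dotProduct, dotProduct_add]; ring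
  lie_add x y z := by
    refine Prod.ext ?_ (Prod.ext ?_ ?_)
    · show (0 : Fin m → F) = 0 + 0; rw [add_zero]
    · show (0 : Fin m → F) = 0 + 0; rw [add_zero]
    · show x.1 ⬝ᵥ (y.2.1 + z.2.1) - (y.1 + z.1) ⬝ᵥ x.2.1 =
        (x.1 ⬝ᵥ y.2.1 - y.1 ⬝ᵥ x.2.1) + (x.1 ⬝ᵥ z.2.1 - z.1 ⬝ᵥ x.2.1)
      rw [add_dotProduct, dotProduct_add]; ring
  lie_self x := by
    refine Prod.ext rfl (Prod.ext rfl ?_)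
    show x.1 ⬝ᵥ x.2.1 - x.1 ⬝ᵥ x.2.1 = 0
    ring
  leibniz_lie x y z := by
    refine Prod.ext ?_ (Prod.ext ?_ ?_)
    · show (0 : Fin m → F) = 0 + 0; rw [add_zero]
    · show (0 : Fin m → F) = 0 + 0; rw [add_zero]
    · show x.1 ⬝ᵥ (0 : Fin m → F) - (0 : Fin m → F) ⬝ᵥ x.2.1 =
        ((0 : Fin m → F) ⬝ᵥ z.2.1 - z.1 ⬝ᵥ (0 : Fin m → F)) +
          (y.1 ⬝ᵥ (0 : Fin m → F) - (0 : Fin m → F) ⬝ᵥ y.2.1)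
      simp

instance (m : ℕ) : LieAlgebra F (Heis F m) where
  lie_smul t x y := by
    refine Prod.ext ?_ (Prod.ext ?_ ?_)
    · show (0 : Fin m → F) = t • 0; rw [smul_zero]
    · show (0 : Fin m → F) = t • 0; rw [smul_zero]
    · show x.1 ⬝ᵥ (t • y.2.1) - (t • y.1) ⬝ᵥ x.2.1 = t • (x.1 ⬝ᵥ y.2.1 - y.1 ⬝ᵥ x.2.1)
      rw [dotProduct_smul, smul_dotProduct, smul_sub]

instance (m : ℕ) : FiniteDimensional F (Heis F m) :=
  (inferInstance : FiniteDimensional F ((Fin m → F) × (Fin m → F) × F))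
end Heis
open LieAlgebra

universe u v

section Functors
variable (F : Type u) [Field F] (L : Type v) [LieRing L] [LieAlgebra F L]

/-- The canonical free presentation `FreeLieAlgebra F L → L`. -/
noncomputable def presHom : FreeLieAlgebra F L →ₗ⁅F⁆ L := FreeLieAlgebra.lift F id

/-- The relation ideal `R` of the canonical free presentation. -/
noncomputable def presKer : LieIdeal F (FreeLieAlgebra F L) := (presHom F L).ker

/-- The Schur multiplier `M(L) = (R ∩ F²)/[R,F]` of a Lie algebra. -/
noncomputable abbrev Multiplier : Type (max u v) :=
  ↥((presKer F L ⊓ derivedSeries F (FreeLieAlgebra F L) 1).toSubmodule) ⧸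
    (Submodule.comap
      ((presKer F L ⊓ derivedSeries F (FreeLieAlgebra F L) 1).toSubmodule).subtype
      (⁅presKer F L, (⊤ : LieIdeal F (FreeLieAlgebra F L))⁆ : LieIdeal F (FreeLieAlgebra F L)).toSubmodule)


/-- Relations defining the nonabelian tensor square. -/
def tensorRel : Set (FreeLieAlgebra F (L × L)) :=
  letI e : L × L → FreeLieAlgebra F (L × L) := FreeLieAlgebra.of F
  { x | (∃ (c : F) (a b : L), x = e (c • a, b) - c • e (a, b)) ∨
        (∃ (c : F) (a b : L), x = e (a, c • b) - c • e (a, b)) ∨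
        (∃ a a' b : L, x = e (a + a', b) - e (a, b) - e (a', b)) ∨
        (∃ a b b' : L, x = e (a, b + b') - e (a, b) - e (a, b')) ∨
        (∃ a a' b : L, x = e (⁅a, a'⁆, b) - e (a, ⁅a', b⁆) + e (a', ⁅a, b⁆)) ∨
        (∃ a b b' : L, x = e (a, ⁅b, b'⁆) - e (⁅b', a⁆, b) + e (⁅b, a⁆, b')) ∨
        (∃ a b a' b' : L, x = ⁅e (a, b), e (a', b')⁆ + e (⁅b, a⁆, ⁅a', b'⁆)) }

/-- The nonabelian tensor square `L ⊗ L`. -/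
abbrev NTensor : Type (max u v) :=
  FreeLieAlgebra F (L × L) ⧸ LieSubmodule.lieSpan F (FreeLieAlgebra F (L × L)) (tensorRel F L)


/-- The generator `a ⊗ b` of the nonabelian tensor square. -/
noncomputable def tmk (a b : L) : NTensor F L :=
  LieSubmodule.Quotient.mk (N := LieSubmodule.lieSpan F (FreeLieAlgebra F (L × L)) (tensorRel F L))
    (FreeLieAlgebra.of F (a, b))

/-- The square `L □ L`, i.e. the subalgebra of `L ⊗ L` generated by the elements `a ⊗ a`. -/
noncomputable def SqSub : LieSubalgebra F (NTensor F L) :=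
  LieSubalgebra.lieSpan F _ { x | ∃ a : L, x = tmk F L a a }

/-- The ideal of `L ⊗ L` generated by the elements `a ⊗ a`. -/
noncomputable def sqIdeal : LieIdeal F (NTensor F L) :=
  LieSubmodule.lieSpan F _ { x | ∃ a : L, x = tmk F L a a }

/-- The exterior square `L ∧ L`. -/
noncomputable abbrev ExtSq : Type (max u v) := NTensor F L ⧸ sqIdeal F L


/-- The generator `a ∧ b` of the exterior square. -/
noncomputable def wmk (a b : L) : ExtSq F L :=
  LieSubmodule.Quotient.mk (N := sqIdeal F L) (tmk F L a b)

/-- The exterior center `Z^∧(L)`. -/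
noncomputable def extCenter : Set L := { x : L | ∀ l : L, wmk F L x l = 0 }

/-- A Lie algebra is capable if it is isomorphic to `H/Z(H)` for some Lie algebra `H`. -/
def Capable : Prop :=
  ∃ (H : Type (max u v)) (_ : LieRing H) (_ : LieAlgebra F H),
    Nonempty ((H ⧸ LieAlgebra.center F H) ≃ₗ⁅F⁆ L)

/-- The corank `t(L)` of an `n`-dimensional nilpotent Lie algebra. -/
noncomputable def corank : ℕ :=
  Module.finrank F L * (Module.finrank F L - 1) / 2 - Module.finrank F (Multiplier F L)

/-- The abelianization of `L` (as an `F`-module). -/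
noncomputable abbrev AbQuot : Type v := L ⧸ derivedSeries F L 1

end Functors

universe w

section SchurAux
open FreeLieAlgebra

variable {F : Type u} [Field F]

/-- A Lie subalgebra of a free Lie algebra containing all generators is everything. -/
theorem freeLie_forall_mem {X : Type w} (S : LieSubalgebra F (FreeLieAlgebra F X))
    (h : ∀ x, of F x ∈ S) (y : FreeLieAlgebra F X) : y ∈ S := by
  set L : FreeLieAlgebra F X →ₗ⁅F⁆ S := lift F (fun x => (⟨of F x, h x⟩ : S)) with hL
  have key : S.incl.comp L = LieHom.id := by
    apply FreeLieAlgebra.hom_ext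
    intro x
    simp [hL, lift_of_apply]
  have h2 : ((L y : S) : FreeLieAlgebra F X) = y := by
    have := DFunLike.congr_fun key y
    simpa using this
  exact h2 ▸ (L y).2

theorem theta_sub_mem {L' L : Type*} [LieRing L'] [LieAlgebra F L'] [LieRing L] [LieAlgebra F L]
    (π : L' →ₗ⁅F⁆ L) (θ : L' →ₗ⁅F⁆ L') (hθ : ∀ x, π (θ x) = π x)
    {z : L'} (hz : z ∈ derivedSeries F L' 1) :
    θ z - z ∈ (⁅π.ker, (⊤ : LieIdeal F L')⁆ : LieIdeal F L').toSubmodule := by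
  have hds : derivedSeries F L' 1 = ⁅(⊤ : LieIdeal F L'), (⊤ : LieIdeal F L')⁆ := by
    rw [derivedSeries_def, derivedSeriesOfIdeal_succ, derivedSeriesOfIdeal_zero]
  rw [hds] at hz
  have hz' : z ∈ Submodule.span F
      {m : L' | ∃ x ∈ (⊤ : LieIdeal F L'), ∃ n ∈ (⊤ : LieIdeal F L'), ⁅x, n⁆ = m} := by
    rw [← LieSubmodule.lieIdeal_oper_eq_linear_span']
    exact hz
  set P := (⁅π.ker, (⊤ : LieIdeal F L')⁆ : LieIdeal F L').toSubmodule with hP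
  refine Submodule.span_induction ?_ ?_ ?_ ?_ hz'
  · rintro m ⟨x, -, n, -, rfl⟩
    have hxk : θ x - x ∈ π.ker := by
      rw [LieHom.mem_ker, map_sub, hθ, sub_self]
    have hnk : θ n - n ∈ π.ker := by
      rw [LieHom.mem_ker, map_sub, hθ, sub_self]
    have hsplit : θ ⁅x, n⁆ - ⁅x, n⁆ = ⁅θ x - x, θ n⁆ + ⁅x, θ n - n⁆ := by
      rw [LieHom.map_lie, sub_lie, lie_sub]
      abel
    rw [hsplit]
    refine Submodule.add_mem _ ?_ ?_
    · exact LieSubmodule.lie_mem_lie hxk (LieSubmodule.mem_top _)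
    · have : ⁅x, θ n - n⁆ = -⁅θ n - n, x⁆ := (lie_skew _ _).symm
      rw [this]
      exact Submodule.neg_mem _ (LieSubmodule.lie_mem_lie hnk (LieSubmodule.mem_top _))
  · simpa using Submodule.zero_mem P
  · intro a b _ _ ha hb
    have : θ (a + b) - (a + b) = (θ a - a) + (θ b - b) := by rw [map_add]; abel
    rw [this]; exact Submodule.add_mem _ ha hb
  · intro c a _ ha
    have : θ (c • a) - c • a = c • (θ a - a) := by rw [map_smul, smul_sub]
    rw [this]; exact Submodule.smul_mem _ _ ha

variable {L₁ : Type*} {M₁ : Type*} {L₂ : Type*} {M₂ : Type*}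
  [LieRing L₁] [LieAlgebra F L₁] [LieRing M₁] [LieAlgebra F M₁]
  [LieRing L₂] [LieAlgebra F L₂] [LieRing M₂] [LieAlgebra F M₂]

/-- The Hopf-formula quotient of a presentation. -/
noncomputable abbrev hopfQ (π : L₁ →ₗ⁅F⁆ M₁) : Type _ :=
  ↥((π.ker ⊓ derivedSeries F L₁ 1).toSubmodule) ⧸
    (Submodule.comap ((π.ker ⊓ derivedSeries F L₁ 1).toSubmodule).subtype
      (⁅π.ker, (⊤ : LieIdeal F L₁)⁆ : LieIdeal F L₁).toSubmodule)

theorem lie_ker_map (π₁ : L₁ →ₗ⁅F⁆ M₁) (π₂ : L₂ →ₗ⁅F⁆ M₂) (f : L₁ →ₗ⁅F⁆ L₂)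
    (hker : ∀ x ∈ π₁.ker, f x ∈ π₂.ker) :
    ∀ z ∈ (⁅π₁.ker, (⊤ : LieIdeal F L₁)⁆ : LieIdeal F L₁).toSubmodule,
      f z ∈ (⁅π₂.ker, (⊤ : LieIdeal F L₂)⁆ : LieIdeal F L₂).toSubmodule := by
  intro z hz
  rw [LieSubmodule.mem_toSubmodule]
  rw [LieSubmodule.mem_toSubmodule] at hz
  have hz' : z ∈ Submodule.span F {m : L₁ | ∃ x ∈ π₁.ker, ∃ n ∈ (⊤ : LieIdeal F L₁), ⁅x, n⁆ = m} := by
    rw [← LieSubmodule.lieIdeal_oper_eq_linear_span']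
    exact hz
  clear hz
  refine Submodule.span_induction ?_ ?_ ?_ ?_ hz'
  · rintro m ⟨x, hx, n, -, rfl⟩
    rw [LieHom.map_lie]
    exact LieSubmodule.lie_mem_lie (hker x hx) (LieSubmodule.mem_top _)
  · rw [map_zero]; exact Submodule.zero_mem _
  · intro a b _ _ ha hb; rw [map_add]; exact Submodule.add_mem _ ha hb
  · intro c a _ ha; rw [map_smul]; exact Submodule.smul_mem _ _ ha

theorem hopf_sub_mem (π : L₁ →ₗ⁅F⁆ M₁) (f : L₁ →ₗ⁅F⁆ L₂) (π₂ : L₂ →ₗ⁅F⁆ M₂)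
    (hker : ∀ x ∈ π.ker, f x ∈ π₂.ker) :
    ∀ x ∈ (π.ker ⊓ derivedSeries F L₁ 1).toSubmodule,
      f x ∈ (π₂.ker ⊓ derivedSeries F L₂ 1).toSubmodule := by
  intro x hx
  rw [LieSubmodule.mem_toSubmodule, LieSubmodule.mem_inf] at hx ⊢
  refine ⟨hker x hx.1, ?_⟩
  exact LieIdeal.derivedSeries_map_le 1 (LieIdeal.mem_map hx.2)

/-- Functoriality of the Hopf quotient. -/
noncomputable def hopfMap (π₁ : L₁ →ₗ⁅F⁆ M₁) (π₂ : L₂ →ₗ⁅F⁆ M₂) (f : L₁ →ₗ⁅F⁆ L₂)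
    (hker : ∀ x ∈ π₁.ker, f x ∈ π₂.ker) : hopfQ π₁ →ₗ[F] hopfQ π₂ :=
  Submodule.mapQ _ _ ((f : L₁ →ₗ[F] L₂).restrict (hopf_sub_mem π₁ f π₂ hker))
    (by
      intro x hx
      rw [Submodule.mem_comap] at hx ⊢
      exact lie_ker_map π₁ π₂ f hker _ hx)

@[simp] theorem hopfMap_mk (π₁ : L₁ →ₗ⁅F⁆ M₁) (π₂ : L₂ →ₗ⁅F⁆ M₂) (f : L₁ →ₗ⁅F⁆ L₂)
    (hker : ∀ x ∈ π₁.ker, f x ∈ π₂.ker) (x : (π₁.ker ⊓ derivedSeries F L₁ 1).toSubmodule) :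
    hopfMap π₁ π₂ f hker (Submodule.Quotient.mk x) =
      Submodule.Quotient.mk ⟨f x, hopf_sub_mem π₁ f π₂ hker x x.2⟩ :=
  rfl

end SchurAux

section Chunk2
open FreeLieAlgebra

variable {F : Type u} [Field F]

theorem hopf_nonempty_equiv {X Y M : Type*} [LieRing M] [LieAlgebra F M]
    (π₁ : FreeLieAlgebra F X →ₗ⁅F⁆ M) (π₂ : FreeLieAlgebra F Y →ₗ⁅F⁆ M)
    (h₁ : Function.Surjective π₁) (h₂ : Function.Surjective π₂) :
    Nonempty (hopfQ π₁ ≃ₗ[F] hopfQ π₂) := by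
  choose s₁ hs₁ using h₁
  choose s₂ hs₂ using h₂
  set α : FreeLieAlgebra F X →ₗ⁅F⁆ FreeLieAlgebra F Y :=
    lift F (fun x => s₂ (π₁ (of F x))) with hαdef
  set β : FreeLieAlgebra F Y →ₗ⁅F⁆ FreeLieAlgebra F X :=
    lift F (fun y => s₁ (π₂ (of F y))) with hβdef
  have hα : ∀ x, π₂ (α x) = π₁ x := by
    have : π₂.comp α = π₁ := by
      apply FreeLieAlgebra.hom_ext
      intro x
      simp [hαdef, lift_of_apply, hs₂]
    intro x
    exact DFunLike.congr_fun this x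
  have hβ : ∀ y, π₁ (β y) = π₂ y := by
    have : π₁.comp β = π₂ := by
      apply FreeLieAlgebra.hom_ext
      intro y
      simp [hβdef, lift_of_apply, hs₁]
    intro y
    exact DFunLike.congr_fun this y
  have hkerα : ∀ x ∈ π₁.ker, α x ∈ π₂.ker := by
    intro x hx
    rw [LieHom.mem_ker] at hx ⊢
    rw [hα, hx]
  have hkerβ : ∀ y ∈ π₂.ker, β y ∈ π₁.ker := by
    intro y hy
    rw [LieHom.mem_ker] at hy ⊢
    rw [hβ, hy]
  refine ⟨LinearEquiv.ofLinear (hopfMap π₁ π₂ α hkerα) (hopfMap π₂ π₁ β hkerβ) ?_ ?_⟩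
  · apply LinearMap.ext
    intro q
    obtain ⟨⟨y, hy⟩, rfl⟩ := Submodule.Quotient.mk_surjective _ q
    simp only [LinearMap.comp_apply, hopfMap_mk, LinearMap.id_apply]
    rw [Submodule.Quotient.eq]
    have hy2 : y ∈ derivedSeries F (FreeLieAlgebra F Y) 1 :=
      ((LieSubmodule.mem_inf _ _ _).mp hy).2
    have := theta_sub_mem π₂ (α.comp β) (fun t => by
      rw [LieHom.comp_apply, hα, hβ]) hy2
    exact this
  · apply LinearMap.ext
    intro q
    obtain ⟨⟨x, hx⟩, rfl⟩ := Submodule.Quotient.mk_surjective _ q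
    simp only [LinearMap.comp_apply, hopfMap_mk, LinearMap.id_apply]
    rw [Submodule.Quotient.eq]
    have hx2 : x ∈ derivedSeries F (FreeLieAlgebra F X) 1 :=
      ((LieSubmodule.mem_inf _ _ _).mp hx).2
    have := theta_sub_mem π₁ (β.comp α) (fun t => by
      rw [LieHom.comp_apply, hβ, hα]) hx2
    exact this

end Chunk2



section DirectSumAux
open FreeLieAlgebra TensorProduct

variable (F : Type u) [Field F] (A B : Type u)
  [LieRing A] [LieAlgebra F A] [LieRing B] [LieAlgebra F B]

theorem lie_mem_ds1 {L : Type*} [LieRing L] [LieAlgebra F L] (x y : L) :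
    ⁅x, y⁆ ∈ derivedSeries F L 1 := by
  rw [derivedSeries_def, derivedSeriesOfIdeal_succ, derivedSeriesOfIdeal_zero]
  exact LieSubmodule.lie_mem_lie (LieSubmodule.mem_top x) (LieSubmodule.mem_top y)

@[simp] theorem presHom_of {L : Type v} [LieRing L] [LieAlgebra F L] (x : L) :
    presHom F L (of F x) = x := by simp [presHom, lift_of_apply]

theorem presHom_surj (L : Type v) [LieRing L] [LieAlgebra F L] :
    Function.Surjective (presHom F L) := fun x =>
  ⟨of F x, by simp [presHom, lift_of_apply]⟩

/-- The coproduct presentation of `A × B`. -/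
noncomputable def piE : FreeLieAlgebra F (A ⊕ B) →ₗ⁅F⁆ A × B :=
  lift F (Sum.elim (fun a => ((a, 0) : A × B)) (fun b => ((0, b) : A × B)))

@[simp] theorem piE_inl (a : A) : piE F A B (of F (Sum.inl a)) = (a, 0) := by
  simp [piE, lift_of_apply]

@[simp] theorem piE_inr (b : B) : piE F A B (of F (Sum.inr b)) = (0, b) := by
  simp [piE, lift_of_apply]

theorem piE_surj : Function.Surjective (piE F A B) := by
  rintro ⟨a, b⟩
  refine ⟨of F (Sum.inl a) + of F (Sum.inr b), ?_⟩
  rw [map_add, piE_inl, piE_inr, Prod.mk_add_mk, add_zero, zero_add]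

noncomputable def iiA : FreeLieAlgebra F A →ₗ⁅F⁆ FreeLieAlgebra F (A ⊕ B) :=
  lift F (fun a => of F (Sum.inl a))

noncomputable def iiB : FreeLieAlgebra F B →ₗ⁅F⁆ FreeLieAlgebra F (A ⊕ B) :=
  lift F (fun b => of F (Sum.inr b))

noncomputable def ppA : FreeLieAlgebra F (A ⊕ B) →ₗ⁅F⁆ FreeLieAlgebra F A :=
  lift F (Sum.elim (of F) (fun _ => 0))

noncomputable def ppB : FreeLieAlgebra F (A ⊕ B) →ₗ⁅F⁆ FreeLieAlgebra F B :=
  lift F (Sum.elim (fun _ => 0) (of F))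

@[simp] theorem iiA_of (a : A) : iiA F A B (of F a) = of F (Sum.inl a) := by
  simp [iiA, lift_of_apply]
@[simp] theorem iiB_of (b : B) : iiB F A B (of F b) = of F (Sum.inr b) := by
  simp [iiB, lift_of_apply]
@[simp] theorem ppA_inl (a : A) : ppA F A B (of F (Sum.inl a)) = of F a := by
  simp [ppA, lift_of_apply]
@[simp] theorem ppA_inr (b : B) : ppA F A B (of F (Sum.inr b)) = 0 := by
  simp [ppA, lift_of_apply]
@[simp] theorem ppB_inl (a : A) : ppB F A B (of F (Sum.inl a)) = 0 := by
  simp [ppB, lift_of_apply]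
@[simp] theorem ppB_inr (b : B) : ppB F A B (of F (Sum.inr b)) = of F b := by
  simp [ppB, lift_of_apply]

theorem ppA_iiA (x : FreeLieAlgebra F A) : ppA F A B (iiA F A B x) = x := by
  have : (ppA F A B).comp (iiA F A B) = LieHom.id := by
    apply FreeLieAlgebra.hom_ext; intro a; simp
  exact DFunLike.congr_fun this x

theorem ppB_iiB (x : FreeLieAlgebra F B) : ppB F A B (iiB F A B x) = x := by
  have : (ppB F A B).comp (iiB F A B) = LieHom.id := by
    apply FreeLieAlgebra.hom_ext; intro a; simp
  exact DFunLike.congr_fun this x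

theorem ppA_iiB (x : FreeLieAlgebra F B) : ppA F A B (iiB F A B x) = 0 := by
  have : (ppA F A B).comp (iiB F A B) = (0 : FreeLieAlgebra F B →ₗ⁅F⁆ FreeLieAlgebra F A) := by
    apply FreeLieAlgebra.hom_ext; intro b; simp
  have h := DFunLike.congr_fun this x
  simpa using h

theorem ppB_iiA (x : FreeLieAlgebra F A) : ppB F A B (iiA F A B x) = 0 := by
  have : (ppB F A B).comp (iiA F A B) = (0 : FreeLieAlgebra F A →ₗ⁅F⁆ FreeLieAlgebra F B) := by
    apply FreeLieAlgebra.hom_ext; intro a; simp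
  have h := DFunLike.congr_fun this x
  simpa using h

/-- The `A`-injection into `A × B` as a Lie homomorphism. -/
noncomputable def inlHom : A →ₗ⁅F⁆ A × B :=
  { LinearMap.prod LinearMap.id (0 : A →ₗ[F] B) with
    map_lie' := by
      intro x y
      refine Prod.ext rfl ?_
      show (0 : B) = ⁅(0 : B), (0 : B)⁆
      rw [zero_lie] }

noncomputable def inrHom : B →ₗ⁅F⁆ A × B :=
  { LinearMap.prod (0 : B →ₗ[F] A) LinearMap.id with
    map_lie' := by
      intro x y
      refine Prod.ext ?_ rfl
      show (0 : A) = ⁅(0 : A), (0 : A)⁆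
      rw [zero_lie] }

noncomputable def fstHom : A × B →ₗ⁅F⁆ A :=
  { LinearMap.fst F A B with map_lie' := rfl }

@[simp] theorem inlHom_apply (a : A) : inlHom F A B a = (a, 0) := rfl
@[simp] theorem inrHom_apply (b : B) : inrHom F A B b = (0, b) := rfl

noncomputable def sndHom : A × B →ₗ⁅F⁆ B :=
  { LinearMap.snd F A B with map_lie' := rfl }

@[simp] theorem fstHom_apply (x : A × B) : fstHom F A B x = x.1 := rfl
@[simp] theorem sndHom_apply (x : A × B) : sndHom F A B x = x.2 := rfl

theorem piE_iiA (x : FreeLieAlgebra F A) :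
    piE F A B (iiA F A B x) = (presHom F A x, 0) := by
  have : (piE F A B).comp (iiA F A B) = (inlHom F A B).comp (presHom F A) := by
    apply FreeLieAlgebra.hom_ext; intro a
    simp only [LieHom.comp_apply, iiA_of, piE_inl, presHom_of]
    rfl
  exact DFunLike.congr_fun this x

theorem piE_iiB (x : FreeLieAlgebra F B) :
    piE F A B (iiB F A B x) = (0, presHom F B x) := by
  have : (piE F A B).comp (iiB F A B) = (inrHom F A B).comp (presHom F B) := by
    apply FreeLieAlgebra.hom_ext; intro b
    simp only [LieHom.comp_apply, iiB_of, piE_inr, presHom_of]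
    rfl
  exact DFunLike.congr_fun this x

theorem presA_ppA (x : FreeLieAlgebra F (A ⊕ B)) :
    presHom F A (ppA F A B x) = (piE F A B x).1 := by
  have : (presHom F A).comp (ppA F A B) = (fstHom F A B).comp (piE F A B) := by
    apply FreeLieAlgebra.hom_ext
    rintro (a | b) <;>
      simp only [LieHom.comp_apply, ppA_inl, ppA_inr, piE_inl, piE_inr, presHom_of,
        map_zero] <;> rfl
  exact DFunLike.congr_fun this x

theorem presB_ppB (x : FreeLieAlgebra F (A ⊕ B)) :
    presHom F B (ppB F A B x) = (piE F A B x).2 := by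
  have : (presHom F B).comp (ppB F A B) = (sndHom F A B).comp (piE F A B) := by
    apply FreeLieAlgebra.hom_ext
    rintro (a | b) <;>
      simp only [LieHom.comp_apply, ppB_inl, ppB_inr, piE_inl, piE_inr, presHom_of,
        map_zero] <;> rfl
  exact DFunLike.congr_fun this x

theorem iiA_ker : ∀ x ∈ (presHom F A).ker, iiA F A B x ∈ (piE F A B).ker := by
  intro x hx
  rw [LieHom.mem_ker] at hx ⊢
  rw [piE_iiA, hx]
  rfl

theorem iiB_ker : ∀ x ∈ (presHom F B).ker, iiB F A B x ∈ (piE F A B).ker := by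
  intro x hx
  rw [LieHom.mem_ker] at hx ⊢
  rw [piE_iiB, hx]
  rfl

theorem ppA_ker : ∀ x ∈ (piE F A B).ker, ppA F A B x ∈ (presHom F A).ker := by
  intro x hx
  rw [LieHom.mem_ker] at hx ⊢
  rw [presA_ppA, hx]
  rfl

theorem ppB_ker : ∀ x ∈ (piE F A B).ker, ppB F A B x ∈ (presHom F B).ker := by
  intro x hx
  rw [LieHom.mem_ker] at hx ⊢
  rw [presB_ppB, hx]
  rfl

/-- The generating cross bracket. -/
noncomputable def genAB (a : A) (b : B) : FreeLieAlgebra F (A ⊕ B) :=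
  ⁅of F (Sum.inl a : A ⊕ B), of F (Sum.inr b : A ⊕ B)⁆

theorem genAB_mem_ker (a : A) (b : B) : genAB F A B a b ∈ (piE F A B).ker := by
  rw [LieHom.mem_ker, genAB, LieHom.map_lie, piE_inl, piE_inr]
  refine Prod.ext ?_ ?_
  · exact lie_zero a
  · exact zero_lie b

theorem genAB_mem_S (a : A) (b : B) :
    genAB F A B a b ∈ ((piE F A B).ker ⊓ derivedSeries F (FreeLieAlgebra F (A ⊕ B)) 1).toSubmodule :=
  (LieSubmodule.mem_inf _ _ _).mpr ⟨genAB_mem_ker F A B a b, by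
    rw [genAB]; exact lie_mem_ds1 F _ _⟩

noncomputable def abmkA : A →ₗ[F] AbQuot F A := (derivedSeries F A 1).toSubmodule.mkQ
noncomputable def abmkB : B →ₗ[F] AbQuot F B := (derivedSeries F B 1).toSubmodule.mkQ

@[simp] theorem abmkA_lie (x y : A) : abmkA F A ⁅x, y⁆ = 0 :=
  (Submodule.Quotient.mk_eq_zero _).mpr (lie_mem_ds1 F x y)

@[simp] theorem abmkB_lie (x y : B) : abmkB F B ⁅x, y⁆ = 0 :=
  (Submodule.Quotient.mk_eq_zero _).mpr (lie_mem_ds1 F x y)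

theorem abmkA_surj : Function.Surjective (abmkA F A) := Submodule.mkQ_surjective _
theorem abmkB_surj : Function.Surjective (abmkB F B) := Submodule.mkQ_surjective _

/-- The central extension of `A × B` by `A^ab ⊗ B^ab`. -/
abbrev KK : Type u := A × B × (TensorProduct F (AbQuot F A) (AbQuot F B))

noncomputable instance instLieRingKK : LieRing (KK F A B) where
  bracket x y := (⁅x.1, y.1⁆, ⁅x.2.1, y.2.1⁆,
    abmkA F A x.1 ⊗ₜ[F] abmkB F B y.2.1 - abmkA F A y.1 ⊗ₜ[F] abmkB F B x.2.1)
  add_lie x y z := by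
    refine Prod.ext ?_ (Prod.ext ?_ ?_)
    · exact add_lie x.1 y.1 z.1
    · exact add_lie x.2.1 y.2.1 z.2.1
    · show abmkA F A (x.1 + y.1) ⊗ₜ[F] abmkB F B z.2.1
          - abmkA F A z.1 ⊗ₜ[F] abmkB F B (x.2.1 + y.2.1)
        = (abmkA F A x.1 ⊗ₜ[F] abmkB F B z.2.1 - abmkA F A z.1 ⊗ₜ[F] abmkB F B x.2.1)
          + (abmkA F A y.1 ⊗ₜ[F] abmkB F B z.2.1 - abmkA F A z.1 ⊗ₜ[F] abmkB F B y.2.1)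
      simp only [map_add, add_tmul, tmul_add]
      abel
  lie_add x y z := by
    refine Prod.ext ?_ (Prod.ext ?_ ?_)
    · exact lie_add x.1 y.1 z.1
    · exact lie_add x.2.1 y.2.1 z.2.1
    · show abmkA F A x.1 ⊗ₜ[F] abmkB F B (y.2.1 + z.2.1)
          - abmkA F A (y.1 + z.1) ⊗ₜ[F] abmkB F B x.2.1
        = (abmkA F A x.1 ⊗ₜ[F] abmkB F B y.2.1 - abmkA F A y.1 ⊗ₜ[F] abmkB F B x.2.1)
          + (abmkA F A x.1 ⊗ₜ[F] abmkB F B z.2.1 - abmkA F A z.1 ⊗ₜ[F] abmkB F B x.2.1)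
      simp only [map_add, add_tmul, tmul_add]
      abel
  lie_self x := by
    refine Prod.ext ?_ (Prod.ext ?_ ?_)
    · exact lie_self x.1
    · exact lie_self x.2.1
    · exact sub_self _
  leibniz_lie x y z := by
    refine Prod.ext ?_ (Prod.ext ?_ ?_)
    · exact leibniz_lie x.1 y.1 z.1
    · exact leibniz_lie x.2.1 y.2.1 z.2.1
    · show abmkA F A x.1 ⊗ₜ[F] abmkB F B ⁅y.2.1, z.2.1⁆
          - abmkA F A ⁅y.1, z.1⁆ ⊗ₜ[F] abmkB F B x.2.1
        = (abmkA F A ⁅x.1, y.1⁆ ⊗ₜ[F] abmkB F B z.2.1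
            - abmkA F A z.1 ⊗ₜ[F] abmkB F B ⁅x.2.1, y.2.1⁆)
          + (abmkA F A y.1 ⊗ₜ[F] abmkB F B ⁅x.2.1, z.2.1⁆
            - abmkA F A ⁅x.1, z.1⁆ ⊗ₜ[F] abmkB F B y.2.1)
      simp

noncomputable instance instLieAlgebraKK : LieAlgebra F (KK F A B) where
  lie_smul t x y := by
    refine Prod.ext ?_ (Prod.ext ?_ ?_)
    · exact lie_smul t x.1 y.1
    · exact lie_smul t x.2.1 y.2.1
    · show abmkA F A x.1 ⊗ₜ[F] abmkB F B (t • y.2.1)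
          - abmkA F A (t • y.1) ⊗ₜ[F] abmkB F B x.2.1
        = t • (abmkA F A x.1 ⊗ₜ[F] abmkB F B y.2.1 - abmkA F A y.1 ⊗ₜ[F] abmkB F B x.2.1)
      simp only [_root_.map_smul, tmul_smul, smul_tmul', smul_sub]

@[simp] theorem KK_bracket (x y : KK F A B) :
    ⁅x, y⁆ = ((⁅x.1, y.1⁆, ⁅x.2.1, y.2.1⁆,
      abmkA F A x.1 ⊗ₜ[F] abmkB F B y.2.1 - abmkA F A y.1 ⊗ₜ[F] abmkB F B x.2.1) : KK F A B) :=
  rfl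

noncomputable def tauK : FreeLieAlgebra F (A ⊕ B) →ₗ⁅F⁆ KK F A B :=
  lift F (Sum.elim (fun a => ((a, 0, 0) : KK F A B)) (fun b => ((0, b, 0) : KK F A B)))

@[simp] theorem tauK_inl (a : A) : tauK F A B (of F (Sum.inl a)) = ((a, 0, 0) : KK F A B) := by
  simp [tauK, lift_of_apply]

@[simp] theorem tauK_inr (b : B) : tauK F A B (of F (Sum.inr b)) = ((0, b, 0) : KK F A B) := by
  simp [tauK, lift_of_apply]

noncomputable def projKK : KK F A B →ₗ⁅F⁆ A × B :=
  { LinearMap.prod (LinearMap.fst F A _)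
      ((LinearMap.fst F B _).comp (LinearMap.snd F A _)) with
    map_lie' := rfl }

@[simp] theorem projKK_apply (x : KK F A B) : projKK F A B x = (x.1, x.2.1) := rfl

theorem projKK_tauK (x : FreeLieAlgebra F (A ⊕ B)) :
    ((tauK F A B x).1, (tauK F A B x).2.1) = piE F A B x := by
  have : (projKK F A B).comp (tauK F A B) = piE F A B := by
    apply FreeLieAlgebra.hom_ext
    rintro (a | b) <;> simp
  have h := DFunLike.congr_fun this x
  simpa using h

theorem tauK_ker {x : FreeLieAlgebra F (A ⊕ B)} (hx : x ∈ (piE F A B).ker) :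
    (tauK F A B x).1 = 0 ∧ (tauK F A B x).2.1 = 0 := by
  rw [LieHom.mem_ker] at hx
  have h := projKK_tauK F A B x
  rw [hx, Prod.mk.injEq] at h
  exact ⟨h.1, by simpa using h.2⟩

theorem tauK_lie_zero : ∀ z ∈ (⁅(piE F A B).ker,
      (⊤ : LieIdeal F (FreeLieAlgebra F (A ⊕ B)))⁆ :
      LieIdeal F (FreeLieAlgebra F (A ⊕ B))).toSubmodule,
    tauK F A B z = 0 := by
  intro z hz
  have hz' : z ∈ Submodule.span F
      {m : FreeLieAlgebra F (A ⊕ B) | ∃ x ∈ (piE F A B).ker,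
        ∃ n ∈ (⊤ : LieIdeal F (FreeLieAlgebra F (A ⊕ B))), ⁅x, n⁆ = m} := by
    rw [← LieSubmodule.lieIdeal_oper_eq_linear_span']
    exact hz
  refine Submodule.span_induction ?_ ?_ ?_ ?_ hz'
  · rintro m ⟨x, hx, n, -, rfl⟩
    obtain ⟨h1, h2⟩ := tauK_ker F A B hx
    rw [LieHom.map_lie, KK_bracket, h1, h2]
    simp
  · exact map_zero _
  · intro a b _ _ ha hb
    rw [map_add, ha, hb, add_zero]
  · intro c a _ ha
    rw [map_smul, ha, smul_zero]

noncomputable def thirdKK : KK F A B →ₗ[F] TensorProduct F (AbQuot F A) (AbQuot F B) :=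
  (LinearMap.snd F B _).comp (LinearMap.snd F A _)

@[simp] theorem thirdKK_apply (x : KK F A B) : thirdKK F A B x = x.2.2 := rfl

/-- The third component of the direct-sum multiplier. -/
noncomputable def Phi3 : hopfQ (piE F A B) →ₗ[F] TensorProduct F (AbQuot F A) (AbQuot F B) :=
  Submodule.liftQ _ ((thirdKK F A B).comp
      (((tauK F A B : FreeLieAlgebra F (A ⊕ B) →ₗ[F] KK F A B)).comp
        (Submodule.subtype _)))
    (by
      intro x hx
      rw [Submodule.mem_comap] at hx
      rw [LinearMap.mem_ker, LinearMap.comp_apply, LinearMap.comp_apply]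
      have h0 : tauK F A B ((Submodule.subtype _) x) = 0 := tauK_lie_zero F A B _ hx
      rw [show ((tauK F A B : FreeLieAlgebra F (A ⊕ B) →ₗ[F] KK F A B))
          ((Submodule.subtype _) x) = tauK F A B ((Submodule.subtype _) x) from rfl, h0]
      rfl)

@[simp] theorem Phi3_mk (x : ((piE F A B).ker ⊓
      derivedSeries F (FreeLieAlgebra F (A ⊕ B)) 1).toSubmodule) :
    Phi3 F A B (Submodule.Quotient.mk x) = (tauK F A B (x : FreeLieAlgebra F (A ⊕ B))).2.2 :=
  rfl

/-! ### The component maps and their compositional identities -/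

noncomputable def PhiA : hopfQ (piE F A B) →ₗ[F] hopfQ (presHom F A) :=
  hopfMap (piE F A B) (presHom F A) (ppA F A B) (ppA_ker F A B)

noncomputable def PhiB : hopfQ (piE F A B) →ₗ[F] hopfQ (presHom F B) :=
  hopfMap (piE F A B) (presHom F B) (ppB F A B) (ppB_ker F A B)

noncomputable def PsiA : hopfQ (presHom F A) →ₗ[F] hopfQ (piE F A B) :=
  hopfMap (presHom F A) (piE F A B) (iiA F A B) (iiA_ker F A B)

noncomputable def PsiB : hopfQ (presHom F B) →ₗ[F] hopfQ (piE F A B) :=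
  hopfMap (presHom F B) (piE F A B) (iiB F A B) (iiB_ker F A B)

theorem PhiA_PsiA (m : hopfQ (presHom F A)) : PhiA F A B (PsiA F A B m) = m := by
  obtain ⟨⟨x, hx⟩, rfl⟩ := Submodule.Quotient.mk_surjective _ m
  rw [PsiA, PhiA, hopfMap_mk, hopfMap_mk]
  exact congrArg _ (Subtype.ext (ppA_iiA F A B x))

theorem PhiB_PsiB (m : hopfQ (presHom F B)) : PhiB F A B (PsiB F A B m) = m := by
  obtain ⟨⟨x, hx⟩, rfl⟩ := Submodule.Quotient.mk_surjective _ m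
  rw [PsiB, PhiB, hopfMap_mk, hopfMap_mk]
  exact congrArg _ (Subtype.ext (ppB_iiB F A B x))

theorem PhiB_PsiA (m : hopfQ (presHom F A)) : PhiB F A B (PsiA F A B m) = 0 := by
  obtain ⟨⟨x, hx⟩, rfl⟩ := Submodule.Quotient.mk_surjective _ m
  rw [PsiA, PhiB, hopfMap_mk, hopfMap_mk]
  rw [show (⟨ppB F A B (iiA F A B x), by
      exact hopf_sub_mem (piE F A B) (ppB F A B) (presHom F B) (ppB_ker F A B) _
        (hopf_sub_mem (presHom F A) (iiA F A B) (piE F A B) (iiA_ker F A B) _ hx)⟩ :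
      ((presHom F B).ker ⊓ derivedSeries F (FreeLieAlgebra F B) 1).toSubmodule) = 0 from
    Subtype.ext (ppB_iiA F A B x)]
  exact Submodule.Quotient.mk_zero _

theorem PhiA_PsiB (m : hopfQ (presHom F B)) : PhiA F A B (PsiB F A B m) = 0 := by
  obtain ⟨⟨x, hx⟩, rfl⟩ := Submodule.Quotient.mk_surjective _ m
  rw [PsiB, PhiA, hopfMap_mk, hopfMap_mk]
  rw [show (⟨ppA F A B (iiB F A B x), by
      exact hopf_sub_mem (piE F A B) (ppA F A B) (presHom F A) (ppA_ker F A B) _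
        (hopf_sub_mem (presHom F B) (iiB F A B) (piE F A B) (iiB_ker F A B) _ hx)⟩ :
      ((presHom F A).ker ⊓ derivedSeries F (FreeLieAlgebra F A) 1).toSubmodule) = 0 from
    Subtype.ext (ppA_iiB F A B x)]
  exact Submodule.Quotient.mk_zero _

/-- The subalgebra of `KK` supported on the `A` coordinate. -/
noncomputable def KA : LieSubalgebra F (KK F A B) :=
  { LinearMap.ker (LinearMap.snd F A (B × TensorProduct F (AbQuot F A) (AbQuot F B))) with
    lie_mem' := by
      intro x y hx hy
      have hx2 : x.2 = 0 := hx
      have hy2 : y.2 = 0 := hy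
      show (⁅x, y⁆ : KK F A B).2 = 0
      rw [KK_bracket]
      have hx21 : x.2.1 = 0 := by rw [hx2]; rfl
      have hy21 : y.2.1 = 0 := by rw [hy2]; rfl
      refine Prod.ext ?_ ?_
      · show ⁅x.2.1, y.2.1⁆ = 0
        rw [hx21, zero_lie]
      · show abmkA F A x.1 ⊗ₜ[F] abmkB F B y.2.1 - abmkA F A y.1 ⊗ₜ[F] abmkB F B x.2.1 = 0
        rw [hx21, hy21]
        simp }

noncomputable def sigmaA : FreeLieAlgebra F A →ₗ⁅F⁆ KA F A B :=
  lift F (fun a => ⟨((a, 0, 0) : KK F A B), rfl⟩)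

theorem tauK_iiA_snd (x : FreeLieAlgebra F A) : (tauK F A B (iiA F A B x)).2 = 0 := by
  have hcomp : (tauK F A B).comp (iiA F A B) = (KA F A B).incl.comp (sigmaA F A B) := by
    apply FreeLieAlgebra.hom_ext
    intro a
    simp only [LieHom.comp_apply, iiA_of, tauK_inl, sigmaA, lift_of_apply]
    rfl
  have h := DFunLike.congr_fun hcomp x
  simp only [LieHom.comp_apply] at h
  rw [h]
  exact (sigmaA F A B x).2

/-- The subalgebra of `KK` supported on the `B` coordinate. -/
noncomputable def KB : LieSubalgebra F (KK F A B) :=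
  { LinearMap.ker ((LinearMap.fst F A (B × TensorProduct F (AbQuot F A) (AbQuot F B))).prod
      (thirdKK F A B)) with
    lie_mem' := by
      intro x y hx hy
      have hx' : ((x.1, x.2.2) : A × TensorProduct F (AbQuot F A) (AbQuot F B)) = 0 := hx
      have hy' : ((y.1, y.2.2) : A × TensorProduct F (AbQuot F A) (AbQuot F B)) = 0 := hy
      rw [Prod.mk_eq_zero] at hx' hy'
      show ((⁅x, y⁆ : KK F A B).1, (⁅x, y⁆ : KK F A B).2.2) = 0
      rw [KK_bracket]
      refine Prod.ext ?_ ?_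
      · show ⁅x.1, y.1⁆ = 0
        rw [hx'.1, zero_lie]
      · show abmkA F A x.1 ⊗ₜ[F] abmkB F B y.2.1 - abmkA F A y.1 ⊗ₜ[F] abmkB F B x.2.1 = 0
        rw [hx'.1, hy'.1]
        simp }

noncomputable def sigmaB : FreeLieAlgebra F B →ₗ⁅F⁆ KB F A B :=
  lift F (fun b => ⟨((0, b, 0) : KK F A B), rfl⟩)

theorem tauK_iiB_third (x : FreeLieAlgebra F B) :
    (tauK F A B (iiB F A B x)).1 = 0 ∧ (tauK F A B (iiB F A B x)).2.2 = 0 := by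
  have hcomp : (tauK F A B).comp (iiB F A B) = (KB F A B).incl.comp (sigmaB F A B) := by
    apply FreeLieAlgebra.hom_ext
    intro b
    simp only [LieHom.comp_apply, iiB_of, tauK_inr, sigmaB, lift_of_apply]
    rfl
  have h := DFunLike.congr_fun hcomp x
  simp only [LieHom.comp_apply] at h
  rw [h]
  have hmem : (((sigmaB F A B x : KB F A B) : KK F A B).1,
      ((sigmaB F A B x : KB F A B) : KK F A B).2.2) = 0 := (sigmaB F A B x).2
  rw [Prod.mk_eq_zero] at hmem
  exact hmem

theorem Phi3_PsiA (m : hopfQ (presHom F A)) : Phi3 F A B (PsiA F A B m) = 0 := by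
  obtain ⟨⟨x, hx⟩, rfl⟩ := Submodule.Quotient.mk_surjective _ m
  rw [PsiA, hopfMap_mk, Phi3_mk]
  rw [show (tauK F A B (iiA F A B x)).2 = 0 from tauK_iiA_snd F A B x]
  rfl

theorem Phi3_PsiB (m : hopfQ (presHom F B)) : Phi3 F A B (PsiB F A B m) = 0 := by
  obtain ⟨⟨x, hx⟩, rfl⟩ := Submodule.Quotient.mk_surjective _ m
  rw [PsiB, hopfMap_mk, Phi3_mk]
  exact (tauK_iiB_third F A B x).2

/-! ### The map `Psi3` -/

theorem lie_ker_right_mem {d : FreeLieAlgebra F (A ⊕ B)} (e : FreeLieAlgebra F (A ⊕ B))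
    (hd : d ∈ (piE F A B).ker) :
    ⁅d, e⁆ ∈ (⁅(piE F A B).ker, (⊤ : LieIdeal F (FreeLieAlgebra F (A ⊕ B)))⁆ :
      LieIdeal F (FreeLieAlgebra F (A ⊕ B))).toSubmodule :=
  LieSubmodule.lie_mem_lie hd (LieSubmodule.mem_top e)

theorem lie_ker_left_mem (e : FreeLieAlgebra F (A ⊕ B)) {d : FreeLieAlgebra F (A ⊕ B)}
    (hd : d ∈ (piE F A B).ker) :
    ⁅e, d⁆ ∈ (⁅(piE F A B).ker, (⊤ : LieIdeal F (FreeLieAlgebra F (A ⊕ B)))⁆ :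
      LieIdeal F (FreeLieAlgebra F (A ⊕ B))).toSubmodule := by
  rw [← lie_skew]
  exact Submodule.neg_mem _ (lie_ker_right_mem F A B e hd)

theorem mkQ_eq {x y : FreeLieAlgebra F (A ⊕ B)}
    (hx : x ∈ ((piE F A B).ker ⊓ derivedSeries F (FreeLieAlgebra F (A ⊕ B)) 1).toSubmodule)
    (hy : y ∈ ((piE F A B).ker ⊓ derivedSeries F (FreeLieAlgebra F (A ⊕ B)) 1).toSubmodule)
    (h : x - y ∈ (⁅(piE F A B).ker, (⊤ : LieIdeal F (FreeLieAlgebra F (A ⊕ B)))⁆ :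
      LieIdeal F (FreeLieAlgebra F (A ⊕ B))).toSubmodule) :
    (Submodule.Quotient.mk ⟨x, hx⟩ : hopfQ (piE F A B)) = Submodule.Quotient.mk ⟨y, hy⟩ := by
  rw [Submodule.Quotient.eq]
  exact h

theorem mkQ_zero {x : FreeLieAlgebra F (A ⊕ B)}
    (hx : x ∈ ((piE F A B).ker ⊓ derivedSeries F (FreeLieAlgebra F (A ⊕ B)) 1).toSubmodule)
    (h : x ∈ (⁅(piE F A B).ker, (⊤ : LieIdeal F (FreeLieAlgebra F (A ⊕ B)))⁆ :
      LieIdeal F (FreeLieAlgebra F (A ⊕ B))).toSubmodule) :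
    (Submodule.Quotient.mk ⟨x, hx⟩ : hopfQ (piE F A B)) = 0 := by
  rw [Submodule.Quotient.mk_eq_zero]
  exact h

theorem inl_sub_mem_ker (a a' : A) :
    of F (Sum.inl (a + a') : A ⊕ B) - of F (Sum.inl a : A ⊕ B) - of F (Sum.inl a' : A ⊕ B)
      ∈ (piE F A B).ker := by
  rw [LieHom.mem_ker, map_sub, map_sub, piE_inl, piE_inl, piE_inl]
  show inlHom F A B (a + a') - inlHom F A B a - inlHom F A B a' = 0
  rw [← map_sub, ← map_sub, show a + a' - a - a' = 0 from by abel,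
    map_zero]

theorem inl_smul_mem_ker (c : F) (a : A) :
    of F (Sum.inl (c • a) : A ⊕ B) - c • of F (Sum.inl a : A ⊕ B) ∈ (piE F A B).ker := by
  rw [LieHom.mem_ker, map_sub, map_smul, piE_inl, piE_inl]
  show inlHom F A B (c • a) - c • inlHom F A B a = 0
  rw [← map_smul, sub_self]

theorem inl_lie_mem_ker (a a' : A) :
    of F (Sum.inl ⁅a, a'⁆ : A ⊕ B) - ⁅of F (Sum.inl a : A ⊕ B), of F (Sum.inl a' : A ⊕ B)⁆
      ∈ (piE F A B).ker := by
  rw [LieHom.mem_ker, map_sub, LieHom.map_lie, piE_inl, piE_inl, piE_inl]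
  show inlHom F A B ⁅a, a'⁆ - ⁅inlHom F A B a, inlHom F A B a'⁆ = 0
  rw [← LieHom.map_lie, sub_self]

theorem inr_sub_mem_ker (b b' : B) :
    of F (Sum.inr (b + b') : A ⊕ B) - of F (Sum.inr b : A ⊕ B) - of F (Sum.inr b' : A ⊕ B)
      ∈ (piE F A B).ker := by
  rw [LieHom.mem_ker, map_sub, map_sub, piE_inr, piE_inr, piE_inr]
  show inrHom F A B (b + b') - inrHom F A B b - inrHom F A B b' = 0
  rw [← map_sub, ← map_sub, show b + b' - b - b' = 0 from by abel,
    map_zero]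

theorem inr_smul_mem_ker (c : F) (b : B) :
    of F (Sum.inr (c • b) : A ⊕ B) - c • of F (Sum.inr b : A ⊕ B) ∈ (piE F A B).ker := by
  rw [LieHom.mem_ker, map_sub, map_smul, piE_inr, piE_inr]
  show inrHom F A B (c • b) - c • inrHom F A B b = 0
  rw [← map_smul, sub_self]

theorem inr_lie_mem_ker (b b' : B) :
    of F (Sum.inr ⁅b, b'⁆ : A ⊕ B) - ⁅of F (Sum.inr b : A ⊕ B), of F (Sum.inr b' : A ⊕ B)⁆
      ∈ (piE F A B).ker := by
  rw [LieHom.mem_ker, map_sub, LieHom.map_lie, piE_inr, piE_inr, piE_inr]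
  show inrHom F A B ⁅b, b'⁆ - ⁅inrHom F A B b, inrHom F A B b'⁆ = 0
  rw [← LieHom.map_lie, sub_self]

/-- The bilinear map underlying `Psi3`. -/
noncomputable def bz : A →ₗ[F] B →ₗ[F] hopfQ (piE F A B) :=
  LinearMap.mk₂ F
    (fun a b => Submodule.Quotient.mk ⟨genAB F A B a b, genAB_mem_S F A B a b⟩)
    (by
      intro a a' b
      rw [show (Submodule.Quotient.mk ⟨genAB F A B a b, genAB_mem_S F A B a b⟩ :
            hopfQ (piE F A B)) + Submodule.Quotient.mk ⟨genAB F A B a' b, genAB_mem_S F A B a' b⟩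
          = Submodule.Quotient.mk ⟨genAB F A B a b + genAB F A B a' b, Submodule.add_mem _
            (genAB_mem_S F A B a b) (genAB_mem_S F A B a' b)⟩ from rfl]
      refine mkQ_eq F A B _ _ ?_
      have : genAB F A B (a + a') b - (genAB F A B a b + genAB F A B a' b)
          = ⁅of F (Sum.inl (a + a') : A ⊕ B) - of F (Sum.inl a : A ⊕ B)
              - of F (Sum.inl a' : A ⊕ B), of F (Sum.inr b : A ⊕ B)⁆ := by
        rw [genAB, genAB, genAB, sub_lie, sub_lie]
        abel
      rw [this]
      exact lie_ker_right_mem F A B _ (inl_sub_mem_ker F A B a a')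
    )
    (by
      intro c a b
      rw [show (c • Submodule.Quotient.mk ⟨genAB F A B a b, genAB_mem_S F A B a b⟩ :
            hopfQ (piE F A B))
          = Submodule.Quotient.mk ⟨c • genAB F A B a b, Submodule.smul_mem _ c
            (genAB_mem_S F A B a b)⟩ from rfl]
      refine mkQ_eq F A B _ _ ?_
      have : genAB F A B (c • a) b - c • genAB F A B a b
          = ⁅of F (Sum.inl (c • a) : A ⊕ B) - c • of F (Sum.inl a : A ⊕ B),
              of F (Sum.inr b : A ⊕ B)⁆ := by
        rw [genAB, genAB, sub_lie, smul_lie]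
      rw [this]
      exact lie_ker_right_mem F A B _ (inl_smul_mem_ker F A B c a)
    )
    (by
      intro a b b'
      rw [show (Submodule.Quotient.mk ⟨genAB F A B a b, genAB_mem_S F A B a b⟩ :
            hopfQ (piE F A B)) + Submodule.Quotient.mk ⟨genAB F A B a b', genAB_mem_S F A B a b'⟩
          = Submodule.Quotient.mk ⟨genAB F A B a b + genAB F A B a b', Submodule.add_mem _
            (genAB_mem_S F A B a b) (genAB_mem_S F A B a b')⟩ from rfl]
      refine mkQ_eq F A B _ _ ?_
      have : genAB F A B a (b + b') - (genAB F A B a b + genAB F A B a b')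
          = ⁅of F (Sum.inl a : A ⊕ B), of F (Sum.inr (b + b') : A ⊕ B)
              - of F (Sum.inr b : A ⊕ B) - of F (Sum.inr b' : A ⊕ B)⁆ := by
        rw [genAB, genAB, genAB, lie_sub, lie_sub]
        abel
      rw [this]
      exact lie_ker_left_mem F A B _ (inr_sub_mem_ker F A B b b')
    )
    (by
      intro c a b
      rw [show (c • Submodule.Quotient.mk ⟨genAB F A B a b, genAB_mem_S F A B a b⟩ :
            hopfQ (piE F A B))
          = Submodule.Quotient.mk ⟨c • genAB F A B a b, Submodule.smul_mem _ c
            (genAB_mem_S F A B a b)⟩ from rfl]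
      refine mkQ_eq F A B _ _ ?_
      have : genAB F A B a (c • b) - c • genAB F A B a b
          = ⁅of F (Sum.inl a : A ⊕ B), of F (Sum.inr (c • b) : A ⊕ B)
              - c • of F (Sum.inr b : A ⊕ B)⁆ := by
        rw [genAB, genAB, lie_sub]
        have hsm : ⁅of F (Sum.inl a : A ⊕ B), c • of F (Sum.inr b : A ⊕ B)⁆
            = c • ⁅of F (Sum.inl a : A ⊕ B), of F (Sum.inr b : A ⊕ B)⁆ := lie_smul c _ _
        rw [hsm]
      rw [this]
      exact lie_ker_left_mem F A B _ (inr_smul_mem_ker F A B c b)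
    )

@[simp] theorem bz_apply (a : A) (b : B) :
    bz F A B a b = Submodule.Quotient.mk ⟨genAB F A B a b, genAB_mem_S F A B a b⟩ := rfl

theorem bz_gen_lie_left (x x' : A) (b : B) : bz F A B ⁅x, x'⁆ b = 0 := by
  rw [bz_apply]
  refine mkQ_zero F A B _ ?_
  set d := of F (Sum.inl ⁅x, x'⁆ : A ⊕ B)
    - ⁅of F (Sum.inl x : A ⊕ B), of F (Sum.inl x' : A ⊕ B)⁆ with hd
  have hdk : d ∈ (piE F A B).ker := inl_lie_mem_ker F A B x x'
  have hsplit : genAB F A B ⁅x, x'⁆ b = ⁅d, of F (Sum.inr b : A ⊕ B)⁆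
      + (⁅of F (Sum.inl x : A ⊕ B), ⁅of F (Sum.inl x' : A ⊕ B), of F (Sum.inr b : A ⊕ B)⁆⁆
        - ⁅of F (Sum.inl x' : A ⊕ B), ⁅of F (Sum.inl x : A ⊕ B), of F (Sum.inr b : A ⊕ B)⁆⁆) := by
    rw [genAB, show of F (Sum.inl ⁅x, x'⁆ : A ⊕ B)
        = d + ⁅of F (Sum.inl x : A ⊕ B), of F (Sum.inl x' : A ⊕ B)⁆ from by rw [hd]; abel,
      add_lie, lie_lie]
  rw [hsplit]
  refine Submodule.add_mem _ (lie_ker_right_mem F A B _ hdk) (Submodule.sub_mem _ ?_ ?_)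
  · exact lie_ker_left_mem F A B _ (genAB_mem_ker F A B x' b)
  · exact lie_ker_left_mem F A B _ (genAB_mem_ker F A B x b)

theorem bz_gen_lie_right (a : A) (y y' : B) : bz F A B a ⁅y, y'⁆ = 0 := by
  rw [bz_apply]
  refine mkQ_zero F A B _ ?_
  set d := of F (Sum.inr ⁅y, y'⁆ : A ⊕ B)
    - ⁅of F (Sum.inr y : A ⊕ B), of F (Sum.inr y' : A ⊕ B)⁆ with hd
  have hdk : d ∈ (piE F A B).ker := inr_lie_mem_ker F A B y y'
  have hsplit : genAB F A B a ⁅y, y'⁆ = ⁅of F (Sum.inl a : A ⊕ B), d⁆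
      + (⁅⁅of F (Sum.inl a : A ⊕ B), of F (Sum.inr y : A ⊕ B)⁆, of F (Sum.inr y' : A ⊕ B)⁆
        + ⁅of F (Sum.inr y : A ⊕ B), ⁅of F (Sum.inl a : A ⊕ B), of F (Sum.inr y' : A ⊕ B)⁆⁆) := by
    rw [genAB, show of F (Sum.inr ⁅y, y'⁆ : A ⊕ B)
        = d + ⁅of F (Sum.inr y : A ⊕ B), of F (Sum.inr y' : A ⊕ B)⁆ from by rw [hd]; abel,
      lie_add, leibniz_lie]
  rw [hsplit]
  refine Submodule.add_mem _ (lie_ker_left_mem F A B _ hdk) (Submodule.add_mem _ ?_ ?_)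
  · exact lie_ker_right_mem F A B _ (genAB_mem_ker F A B a y)
  · exact lie_ker_left_mem F A B _ (genAB_mem_ker F A B a y')

theorem bz_left_zero : ∀ a ∈ (derivedSeries F A 1).toSubmodule, bz F A B a = 0 := by
  intro a ha
  have ha' : a ∈ Submodule.span F
      {m : A | ∃ x ∈ (⊤ : LieIdeal F A), ∃ n ∈ (⊤ : LieIdeal F A), ⁅x, n⁆ = m} := by
    rw [← LieSubmodule.lieIdeal_oper_eq_linear_span']
    rw [show (⁅(⊤ : LieIdeal F A), (⊤ : LieIdeal F A)⁆ : LieIdeal F A)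
        = derivedSeries F A 1 from by
      rw [derivedSeries_def, derivedSeriesOfIdeal_succ, derivedSeriesOfIdeal_zero]]
    exact ha
  refine Submodule.span_induction ?_ ?_ ?_ ?_ ha'
  · rintro m ⟨x, -, n, -, rfl⟩
    apply LinearMap.ext
    intro b
    rw [bz_gen_lie_left]
    rfl
  · exact LinearMap.map_zero _
  · intro x y _ _ hx hy
    rw [LinearMap.map_add, hx, hy, add_zero]
  · intro c x _ hx
    rw [LinearMap.map_smul, hx, smul_zero]

theorem bz_right_zero (a : A) : ∀ b ∈ (derivedSeries F B 1).toSubmodule, bz F A B a b = 0 := by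
  intro b hb
  have hb' : b ∈ Submodule.span F
      {m : B | ∃ x ∈ (⊤ : LieIdeal F B), ∃ n ∈ (⊤ : LieIdeal F B), ⁅x, n⁆ = m} := by
    rw [← LieSubmodule.lieIdeal_oper_eq_linear_span']
    rw [show (⁅(⊤ : LieIdeal F B), (⊤ : LieIdeal F B)⁆ : LieIdeal F B)
        = derivedSeries F B 1 from by
      rw [derivedSeries_def, derivedSeriesOfIdeal_succ, derivedSeriesOfIdeal_zero]]
    exact hb
  refine Submodule.span_induction ?_ ?_ ?_ ?_ hb'
  · rintro m ⟨x, -, n, -, rfl⟩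
    exact bz_gen_lie_right F A B a x n
  · exact LinearMap.map_zero _
  · intro x y _ _ hx hy
    rw [LinearMap.map_add, hx, hy, add_zero]
  · intro c x _ hx
    rw [LinearMap.map_smul, hx, smul_zero]

noncomputable def g1 : A →ₗ[F] (AbQuot F B →ₗ[F] hopfQ (piE F A B)) where
  toFun a := Submodule.liftQ _ (bz F A B a) (fun b hb => bz_right_zero F A B a b hb)
  map_add' a a' := by
    apply Submodule.linearMap_qext
    apply LinearMap.ext
    intro b
    show bz F A B (a + a') b = bz F A B a b + bz F A B a' b
    rw [map_add]; rfl
  map_smul' c a := by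
    apply Submodule.linearMap_qext
    apply LinearMap.ext
    intro b
    show bz F A B (c • a) b = c • bz F A B a b
    rw [map_smul]; rfl

@[simp] theorem g1_apply (a : A) (b : B) : g1 F A B a (abmkB F B b) = bz F A B a b := rfl

noncomputable def Psi30 : AbQuot F A →ₗ[F] (AbQuot F B →ₗ[F] hopfQ (piE F A B)) :=
  Submodule.liftQ _ (g1 F A B) (by
    intro a ha
    rw [LinearMap.mem_ker]
    apply Submodule.linearMap_qext
    apply LinearMap.ext
    intro b
    have h0 := bz_left_zero F A B a ha
    show bz F A B a b = 0
    rw [h0]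
    rfl)

noncomputable def Psi3 : TensorProduct F (AbQuot F A) (AbQuot F B) →ₗ[F] hopfQ (piE F A B) :=
  TensorProduct.lift (Psi30 F A B)

@[simp] theorem Psi3_tmul (a : A) (b : B) :
    Psi3 F A B (abmkA F A a ⊗ₜ[F] abmkB F B b)
      = Submodule.Quotient.mk ⟨genAB F A B a b, genAB_mem_S F A B a b⟩ := rfl

theorem PhiA_Psi3 (t : TensorProduct F (AbQuot F A) (AbQuot F B)) :
    PhiA F A B (Psi3 F A B t) = 0 := by
  have : (PhiA F A B).comp (Psi3 F A B) = 0 := by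
    apply TensorProduct.ext'
    intro x y
    obtain ⟨a, rfl⟩ := abmkA_surj F A x
    obtain ⟨b, rfl⟩ := abmkB_surj F B y
    rw [LinearMap.comp_apply, Psi3_tmul, PhiA, hopfMap_mk]
    rw [show (⟨ppA F A B (genAB F A B a b), by
        exact hopf_sub_mem (piE F A B) (ppA F A B) (presHom F A) (ppA_ker F A B) _
          (genAB_mem_S F A B a b)⟩ :
        ((presHom F A).ker ⊓ derivedSeries F (FreeLieAlgebra F A) 1).toSubmodule) = 0 from
      Subtype.ext (by
        show ppA F A B (genAB F A B a b) = 0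
        rw [genAB, LieHom.map_lie, ppA_inl, ppA_inr, lie_zero])]
    rw [Submodule.Quotient.mk_zero]
    rfl
  exact DFunLike.congr_fun this t

theorem PhiB_Psi3 (t : TensorProduct F (AbQuot F A) (AbQuot F B)) :
    PhiB F A B (Psi3 F A B t) = 0 := by
  have : (PhiB F A B).comp (Psi3 F A B) = 0 := by
    apply TensorProduct.ext'
    intro x y
    obtain ⟨a, rfl⟩ := abmkA_surj F A x
    obtain ⟨b, rfl⟩ := abmkB_surj F B y
    rw [LinearMap.comp_apply, Psi3_tmul, PhiB, hopfMap_mk]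
    rw [show (⟨ppB F A B (genAB F A B a b), by
        exact hopf_sub_mem (piE F A B) (ppB F A B) (presHom F B) (ppB_ker F A B) _
          (genAB_mem_S F A B a b)⟩ :
        ((presHom F B).ker ⊓ derivedSeries F (FreeLieAlgebra F B) 1).toSubmodule) = 0 from
      Subtype.ext (by
        show ppB F A B (genAB F A B a b) = 0
        rw [genAB, LieHom.map_lie, ppB_inl, ppB_inr, zero_lie])]
    rw [Submodule.Quotient.mk_zero]
    rfl
  exact DFunLike.congr_fun this t

theorem Phi3_Psi3 (t : TensorProduct F (AbQuot F A) (AbQuot F B)) :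
    Phi3 F A B (Psi3 F A B t) = t := by
  have : (Phi3 F A B).comp (Psi3 F A B) = LinearMap.id := by
    apply TensorProduct.ext'
    intro x y
    obtain ⟨a, rfl⟩ := abmkA_surj F A x
    obtain ⟨b, rfl⟩ := abmkB_surj F B y
    rw [LinearMap.comp_apply, Psi3_tmul, Phi3_mk]
    show (tauK F A B (genAB F A B a b)).2.2 = abmkA F A a ⊗ₜ[F] abmkB F B b
    rw [genAB, LieHom.map_lie, tauK_inl, tauK_inr, KK_bracket]
    show abmkA F A a ⊗ₜ[F] abmkB F B b - abmkA F A 0 ⊗ₜ[F] abmkB F B 0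
        = abmkA F A a ⊗ₜ[F] abmkB F B b
    simp
  exact DFunLike.congr_fun this t

/-! ### Surjectivity of `Psi` -/

theorem lieker_le_ds1 {L M : Type*} [LieRing L] [LieAlgebra F L] [LieRing M] [LieAlgebra F M]
    (π : L →ₗ⁅F⁆ M) :
    (⁅π.ker, (⊤ : LieIdeal F L)⁆ : LieIdeal F L) ≤ derivedSeries F L 1 := by
  rw [derivedSeries_def, derivedSeriesOfIdeal_succ, derivedSeriesOfIdeal_zero]
  exact LieSubmodule.mono_lie le_top le_top

/-- The span of the cross generators. -/
noncomputable def Wsp : Submodule F (FreeLieAlgebra F (A ⊕ B)) :=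
  Submodule.span F {x | ∃ a b, x = genAB F A B a b}

/-- The span of the cross generators together with `⁅T, E⁆`. -/
noncomputable def Wp : Submodule F (FreeLieAlgebra F (A ⊕ B)) :=
  Wsp F A B ⊔ (⁅(piE F A B).ker, (⊤ : LieIdeal F (FreeLieAlgebra F (A ⊕ B)))⁆ :
    LieIdeal F (FreeLieAlgebra F (A ⊕ B))).toSubmodule

theorem Wsp_le_ker : ∀ x ∈ Wsp F A B, x ∈ (piE F A B).ker := by
  intro x hx
  refine Submodule.span_le.mpr ?_ hx
  rintro y ⟨a, b, rfl⟩
  exact genAB_mem_ker F A B a b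

theorem Wp_le_ker : ∀ x ∈ Wp F A B, x ∈ (piE F A B).ker := by
  intro x hx
  obtain ⟨s, hs, c, hc, rfl⟩ := Submodule.mem_sup.mp hx
  exact Submodule.add_mem _ (Wsp_le_ker F A B s hs)
    (LieSubmodule.lie_le_left _ _ hc)

theorem Wsp_le_ds : ∀ x ∈ Wsp F A B, x ∈ derivedSeries F (FreeLieAlgebra F (A ⊕ B)) 1 := by
  intro x hx
  refine Submodule.span_le.mpr ?_ hx
  rintro y ⟨a, b, rfl⟩
  rw [genAB]
  exact lie_mem_ds1 F _ _

theorem Wp_le_ds : ∀ x ∈ Wp F A B, x ∈ derivedSeries F (FreeLieAlgebra F (A ⊕ B)) 1 := by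
  intro x hx
  obtain ⟨s, hs, c, hc, rfl⟩ := Submodule.mem_sup.mp hx
  exact Submodule.add_mem _ (Wsp_le_ds F A B s hs) (lieker_le_ds1 F (piE F A B) hc)

theorem lie_Wp_right (e : FreeLieAlgebra F (A ⊕ B)) {x : FreeLieAlgebra F (A ⊕ B)}
    (hx : x ∈ Wp F A B) : ⁅x, e⁆ ∈ Wp F A B :=
  Submodule.mem_sup_right (lie_ker_right_mem F A B e (Wp_le_ker F A B x hx))

theorem lie_Wp_left (e : FreeLieAlgebra F (A ⊕ B)) {x : FreeLieAlgebra F (A ⊕ B)}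
    (hx : x ∈ Wp F A B) : ⁅e, x⁆ ∈ Wp F A B :=
  Submodule.mem_sup_right (lie_ker_left_mem F A B e (Wp_le_ker F A B x hx))

theorem cross_of_mem_Wp (x : FreeLieAlgebra F A) (b : B) :
    ⁅iiA F A B x, of F (Sum.inr b : A ⊕ B)⁆ ∈ Wp F A B := by
  set S1 : LieSubalgebra F (FreeLieAlgebra F A) :=
    { carrier := {x | ⁅iiA F A B x, of F (Sum.inr b : A ⊕ B)⁆ ∈ Wp F A B}
      zero_mem' := by
        show ⁅iiA F A B 0, of F (Sum.inr b : A ⊕ B)⁆ ∈ Wp F A B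
        rw [map_zero, zero_lie]
        exact Submodule.zero_mem _
      add_mem' := by
        intro y z hy hz
        show ⁅iiA F A B (y + z), of F (Sum.inr b : A ⊕ B)⁆ ∈ Wp F A B
        rw [map_add, add_lie]
        exact Submodule.add_mem _ hy hz
      smul_mem' := by
        intro c y hy
        show ⁅iiA F A B (c • y), of F (Sum.inr b : A ⊕ B)⁆ ∈ Wp F A B
        rw [map_smul, smul_lie]
        exact Submodule.smul_mem _ c hy
      lie_mem' := by
        intro y z hy hz
        show ⁅iiA F A B ⁅y, z⁆, of F (Sum.inr b : A ⊕ B)⁆ ∈ Wp F A B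
        rw [LieHom.map_lie, lie_lie]
        exact Submodule.sub_mem _ (lie_Wp_left F A B _ hz) (lie_Wp_left F A B _ hy) } with hS1
  have : ∀ y, y ∈ S1 := by
    apply freeLie_forall_mem
    intro a
    show ⁅iiA F A B (of F a), of F (Sum.inr b : A ⊕ B)⁆ ∈ Wp F A B
    rw [iiA_of]
    exact Submodule.mem_sup_left (Submodule.subset_span ⟨a, b, rfl⟩)
  exact this x

theorem cross_mem_Wp (x : FreeLieAlgebra F A) (y : FreeLieAlgebra F B) :
    ⁅iiA F A B x, iiB F A B y⁆ ∈ Wp F A B := by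
  set S2 : LieSubalgebra F (FreeLieAlgebra F B) :=
    { carrier := {y | ⁅iiA F A B x, iiB F A B y⁆ ∈ Wp F A B}
      zero_mem' := by
        show ⁅iiA F A B x, iiB F A B 0⁆ ∈ Wp F A B
        rw [map_zero, lie_zero]
        exact Submodule.zero_mem _
      add_mem' := by
        intro u v hu hv
        show ⁅iiA F A B x, iiB F A B (u + v)⁆ ∈ Wp F A B
        rw [map_add, lie_add]
        exact Submodule.add_mem _ hu hv
      smul_mem' := by
        intro c u hu
        show ⁅iiA F A B x, iiB F A B (c • u)⁆ ∈ Wp F A B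
        rw [map_smul, lie_smul]
        exact Submodule.smul_mem _ c hu
      lie_mem' := by
        intro u v hu hv
        show ⁅iiA F A B x, iiB F A B ⁅u, v⁆⁆ ∈ Wp F A B
        rw [LieHom.map_lie, leibniz_lie]
        exact Submodule.add_mem _ (lie_Wp_right F A B _ hu) (lie_Wp_left F A B _ hv) } with hS2
  have : ∀ v, v ∈ S2 := by
    apply freeLie_forall_mem
    intro b
    show ⁅iiA F A B x, iiB F A B (of F b)⁆ ∈ Wp F A B
    rw [iiB_of]
    exact cross_of_mem_Wp F A B x b
  exact this y

/-- The decomposition submodule. -/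
noncomputable def Up : Submodule F (FreeLieAlgebra F (A ⊕ B)) :=
  (LinearMap.range (iiA F A B : FreeLieAlgebra F A →ₗ[F] FreeLieAlgebra F (A ⊕ B))
    ⊔ LinearMap.range (iiB F A B : FreeLieAlgebra F B →ₗ[F] FreeLieAlgebra F (A ⊕ B)))
    ⊔ Wp F A B

theorem lie_mem_Up {x y : FreeLieAlgebra F (A ⊕ B)} (hx : x ∈ Up F A B) (hy : y ∈ Up F A B) :
    ⁅x, y⁆ ∈ Up F A B := by
  obtain ⟨m, hm, w, hw, rfl⟩ := Submodule.mem_sup.mp hx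
  obtain ⟨m', hm', w', hw', rfl⟩ := Submodule.mem_sup.mp hy
  have h1 : ⁅m + w, w'⁆ ∈ Up F A B :=
    Submodule.mem_sup_right (lie_Wp_left F A B _ hw')
  have h2 : ⁅w, m'⁆ ∈ Up F A B :=
    Submodule.mem_sup_right (lie_Wp_right F A B _ hw)
  have h3 : ⁅m, m'⁆ ∈ Up F A B := by
    obtain ⟨u, hu, v, hv, rfl⟩ := Submodule.mem_sup.mp hm
    obtain ⟨u', hu', v', hv', rfl⟩ := Submodule.mem_sup.mp hm'
    obtain ⟨a, rfl⟩ := hu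
    obtain ⟨a', rfl⟩ := hu'
    obtain ⟨b, rfl⟩ := hv
    obtain ⟨b', rfl⟩ := hv'
    have e1 : ⁅iiA F A B a, iiA F A B a'⁆ ∈ Up F A B := by
      rw [show ⁅iiA F A B a, iiA F A B a'⁆ = iiA F A B ⁅a, a'⁆ from (LieHom.map_lie _ _ _).symm]
      exact Submodule.mem_sup_left (Submodule.mem_sup_left ⟨⁅a, a'⁆, rfl⟩)
    have e2 : ⁅iiA F A B a, iiB F A B b'⁆ ∈ Up F A B :=
      Submodule.mem_sup_right (cross_mem_Wp F A B a b')
    have e3 : ⁅iiB F A B b, iiA F A B a'⁆ ∈ Up F A B := by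
      rw [show ⁅iiB F A B b, iiA F A B a'⁆ = -⁅iiA F A B a', iiB F A B b⁆ from
        (lie_skew _ _).symm]
      exact Submodule.neg_mem _ (Submodule.mem_sup_right (cross_mem_Wp F A B a' b))
    have e4 : ⁅iiB F A B b, iiB F A B b'⁆ ∈ Up F A B := by
      rw [show ⁅iiB F A B b, iiB F A B b'⁆ = iiB F A B ⁅b, b'⁆ from (LieHom.map_lie _ _ _).symm]
      exact Submodule.mem_sup_left (Submodule.mem_sup_right ⟨⁅b, b'⁆, rfl⟩)
    rw [add_lie, lie_add, lie_add]
    exact Submodule.add_mem _ (Submodule.add_mem _ e1 e2) (Submodule.add_mem _ e3 e4)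
  have : ⁅m + w, m' + w'⁆ = (⁅m, m'⁆ + ⁅w, m'⁆) + ⁅m + w, w'⁆ := by
    rw [lie_add, add_lie]
  rw [this]
  exact Submodule.add_mem _ (Submodule.add_mem _ h3 h2) h1

theorem mem_Up (z : FreeLieAlgebra F (A ⊕ B)) : z ∈ Up F A B := by
  set P : LieSubalgebra F (FreeLieAlgebra F (A ⊕ B)) :=
    { carrier := (Up F A B : Set (FreeLieAlgebra F (A ⊕ B)))
      zero_mem' := Submodule.zero_mem _
      add_mem' := fun hx hy => Submodule.add_mem _ hx hy
      smul_mem' := fun c x hx => Submodule.smul_mem _ c hx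
      lie_mem' := fun hx hy => lie_mem_Up F A B hx hy } with hP
  have : ∀ y, y ∈ P := by
    apply freeLie_forall_mem
    rintro (a | b)
    · show of F (Sum.inl a : A ⊕ B) ∈ Up F A B
      rw [← iiA_of]
      exact Submodule.mem_sup_left (Submodule.mem_sup_left ⟨of F a, rfl⟩)
    · show of F (Sum.inr b : A ⊕ B) ∈ Up F A B
      rw [← iiB_of]
      exact Submodule.mem_sup_left (Submodule.mem_sup_right ⟨of F b, rfl⟩)
  exact this z

/-- The combined map `Psi`. -/
noncomputable def Psi : (hopfQ (presHom F A) × hopfQ (presHom F B) ×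
      TensorProduct F (AbQuot F A) (AbQuot F B)) →ₗ[F] hopfQ (piE F A B) :=
  (PsiA F A B).coprod ((PsiB F A B).coprod (Psi3 F A B))

theorem Psi_apply (m : hopfQ (presHom F A)) (n : hopfQ (presHom F B))
    (t : TensorProduct F (AbQuot F A) (AbQuot F B)) :
    Psi F A B (m, n, t) = PsiA F A B m + (PsiB F A B n + Psi3 F A B t) := rfl

theorem Psi_surjective : Function.Surjective (Psi F A B) := by
  intro q
  obtain ⟨⟨x, hx⟩, rfl⟩ := Submodule.Quotient.mk_surjective _ q
  have hx' := (LieSubmodule.mem_inf _ _ _).mp hx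
  obtain ⟨hxk, hxd⟩ := hx'
  -- decompose x
  obtain ⟨m, hm, w, hw, hxe⟩ := Submodule.mem_sup.mp (mem_Up F A B x)
  obtain ⟨ia, hia, ib, hib, hme⟩ := Submodule.mem_sup.mp hm
  obtain ⟨u, rfl⟩ := hia
  obtain ⟨v, rfl⟩ := hib
  simp only [LieHom.coe_toLinearMap] at hme
  -- kernel facts for u and v
  have hπw : piE F A B w = 0 := Wp_le_ker F A B w hw
  have hπx : piE F A B x = 0 := hxk
  have hsum : piE F A B (iiA F A B u) + piE F A B (iiB F A B v) + piE F A B w = 0 := by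
    rw [← map_add, ← map_add, hme, hxe, hπx]
  rw [piE_iiA, piE_iiB, hπw, add_zero, Prod.mk_add_mk, add_zero, zero_add] at hsum
  rw [Prod.mk_eq_zero] at hsum
  have hu_ker : u ∈ (presHom F A).ker := by rw [LieHom.mem_ker]; exact hsum.1
  have hv_ker : v ∈ (presHom F B).ker := by rw [LieHom.mem_ker]; exact hsum.2
  -- derived series facts for u and v
  obtain ⟨sc, hsc, cc, hcc, hwe⟩ := Submodule.mem_sup.mp hw
  have hWsp_ppA : ∀ s ∈ Wsp F A B, ppA F A B s = 0 := by
    intro s hs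
    have hle : Wsp F A B ≤ LinearMap.ker (ppA F A B : FreeLieAlgebra F (A ⊕ B) →ₗ[F]
        FreeLieAlgebra F A) := by
      rw [Wsp, Submodule.span_le]
      rintro y ⟨a, b, rfl⟩
      rw [SetLike.mem_coe, LinearMap.mem_ker]
      show ppA F A B (genAB F A B a b) = 0
      rw [genAB, LieHom.map_lie, ppA_inl, ppA_inr, lie_zero]
    exact hle hs
  have hWsp_ppB : ∀ s ∈ Wsp F A B, ppB F A B s = 0 := by
    intro s hs
    have hle : Wsp F A B ≤ LinearMap.ker (ppB F A B : FreeLieAlgebra F (A ⊕ B) →ₗ[F]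
        FreeLieAlgebra F B) := by
      rw [Wsp, Submodule.span_le]
      rintro y ⟨a, b, rfl⟩
      rw [SetLike.mem_coe, LinearMap.mem_ker]
      show ppB F A B (genAB F A B a b) = 0
      rw [genAB, LieHom.map_lie, ppB_inl, ppB_inr, zero_lie]
    exact hle hs
  have hppAw : ppA F A B w ∈ (⁅(presHom F A).ker, (⊤ : LieIdeal F (FreeLieAlgebra F A))⁆ :
      LieIdeal F (FreeLieAlgebra F A)).toSubmodule := by
    rw [← hwe, map_add, hWsp_ppA sc hsc, zero_add]
    exact lie_ker_map (piE F A B) (presHom F A) (ppA F A B) (ppA_ker F A B) cc hcc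
  have hppBw : ppB F A B w ∈ (⁅(presHom F B).ker, (⊤ : LieIdeal F (FreeLieAlgebra F B))⁆ :
      LieIdeal F (FreeLieAlgebra F B)).toSubmodule := by
    rw [← hwe, map_add, hWsp_ppB sc hsc, zero_add]
    exact lie_ker_map (piE F A B) (presHom F B) (ppB F A B) (ppB_ker F A B) cc hcc
  have hu_eq : u = ppA F A B x - ppA F A B w := by
    have : ppA F A B x = u + ppA F A B w := by
      rw [← hxe, ← hme, map_add, map_add, ppA_iiA, ppA_iiB, add_zero]
    rw [this]
    abel
  have hv_eq : v = ppB F A B x - ppB F A B w := by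
    have : ppB F A B x = v + ppB F A B w := by
      rw [← hxe, ← hme, map_add, map_add, ppB_iiA, ppB_iiB, zero_add]
    rw [this]
    abel
  have hu_ds : u ∈ (derivedSeries F (FreeLieAlgebra F A) 1).toSubmodule := by
    rw [hu_eq]
    refine Submodule.sub_mem _ ?_ (lieker_le_ds1 F (presHom F A) hppAw)
    exact LieIdeal.derivedSeries_map_le 1 (LieIdeal.mem_map hxd)
  have hv_ds : v ∈ (derivedSeries F (FreeLieAlgebra F B) 1).toSubmodule := by
    rw [hv_eq]
    refine Submodule.sub_mem _ ?_ (lieker_le_ds1 F (presHom F B) hppBw)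
    exact LieIdeal.derivedSeries_map_le 1 (LieIdeal.mem_map hxd)
  have hu_S : u ∈ ((presHom F A).ker ⊓ derivedSeries F (FreeLieAlgebra F A) 1).toSubmodule :=
    (LieSubmodule.mem_inf _ _ _).mpr ⟨hu_ker, hu_ds⟩
  have hv_S : v ∈ ((presHom F B).ker ⊓ derivedSeries F (FreeLieAlgebra F B) 1).toSubmodule :=
    (LieSubmodule.mem_inf _ _ _).mpr ⟨hv_ker, hv_ds⟩
  have hw_S : w ∈ ((piE F A B).ker ⊓
      derivedSeries F (FreeLieAlgebra F (A ⊕ B)) 1).toSubmodule :=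
    (LieSubmodule.mem_inf _ _ _).mpr ⟨Wp_le_ker F A B w hw, Wp_le_ds F A B w hw⟩
  have hsc_S : sc ∈ ((piE F A B).ker ⊓
      derivedSeries F (FreeLieAlgebra F (A ⊕ B)) 1).toSubmodule :=
    (LieSubmodule.mem_inf _ _ _).mpr ⟨Wsp_le_ker F A B sc hsc, Wsp_le_ds F A B sc hsc⟩
  -- the class of sc is in the range of Psi3
  have hsc_range : ∃ t0, Psi3 F A B t0 = (Submodule.Quotient.mk ⟨sc, hsc_S⟩ :
      hopfQ (piE F A B)) := by
    set Ssub := ((piE F A B).ker ⊓ derivedSeries F (FreeLieAlgebra F (A ⊕ B)) 1).toSubmodule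
      with hSsub
    set Nsub := Submodule.comap Ssub.subtype
      (⁅(piE F A B).ker, (⊤ : LieIdeal F (FreeLieAlgebra F (A ⊕ B)))⁆ :
        LieIdeal F (FreeLieAlgebra F (A ⊕ B))).toSubmodule with hNsub
    set V : Submodule F (FreeLieAlgebra F (A ⊕ B)) :=
      Submodule.map Ssub.subtype
        (Submodule.comap Nsub.mkQ (LinearMap.range (Psi3 F A B))) with hV
    have hgen : {x : FreeLieAlgebra F (A ⊕ B) | ∃ a b, x = genAB F A B a b} ⊆ V := by
      rintro y ⟨a, b, rfl⟩
      refine ⟨⟨genAB F A B a b, genAB_mem_S F A B a b⟩, ?_, rfl⟩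
      exact Submodule.mem_comap.mpr (LinearMap.mem_range.mpr
        ⟨abmkA F A a ⊗ₜ[F] abmkB F B b, (Psi3_tmul F A B a b).symm⟩)
    have hscV : sc ∈ V := by
      have : Wsp F A B ≤ V := by rw [Wsp]; exact Submodule.span_le.mpr hgen
      exact this hsc
    obtain ⟨tt, htt, htts⟩ := hscV
    obtain ⟨t0, ht0⟩ := LinearMap.mem_range.mp (Submodule.mem_comap.mp htt)
    refine ⟨t0, ?_⟩
    rw [ht0]
    exact congrArg _ (Subtype.ext htts)
  obtain ⟨t0, ht0⟩ := hsc_range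
  -- assemble
  refine ⟨(Submodule.Quotient.mk ⟨u, hu_S⟩, Submodule.Quotient.mk ⟨v, hv_S⟩, t0), ?_⟩
  rw [Psi_apply, PsiA, PsiB, hopfMap_mk, hopfMap_mk, ht0]
  have hmkw : (Submodule.Quotient.mk ⟨w, hw_S⟩ : hopfQ (piE F A B))
      = Submodule.Quotient.mk ⟨sc, hsc_S⟩ := by
    refine mkQ_eq F A B _ _ ?_
    rw [show w - sc = cc from by rw [← hwe]; abel]
    exact hcc
  rw [← hmkw]
  rw [show (Submodule.Quotient.mk ⟨iiA F A B u, _⟩ : hopfQ (piE F A B))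
      + (Submodule.Quotient.mk ⟨iiB F A B v, _⟩ + Submodule.Quotient.mk ⟨w, hw_S⟩)
    = Submodule.Quotient.mk ⟨iiA F A B u + (iiB F A B v + w), Submodule.add_mem _
        (hopf_sub_mem (presHom F A) (iiA F A B) (piE F A B) (iiA_ker F A B) u hu_S)
        (Submodule.add_mem _
          (hopf_sub_mem (presHom F B) (iiB F A B) (piE F A B) (iiB_ker F A B) v hv_S) hw_S)⟩
    from rfl]
  refine congrArg _ (Subtype.ext ?_)
  show iiA F A B u + (iiB F A B v + w) = x
  rw [← hxe, ← hme]
  abel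

/-! ### The equivalence for the coproduct presentation -/

noncomputable def Phi : hopfQ (piE F A B) →ₗ[F] (hopfQ (presHom F A) × hopfQ (presHom F B) ×
    TensorProduct F (AbQuot F A) (AbQuot F B)) :=
  (PhiA F A B).prod ((PhiB F A B).prod (Phi3 F A B))

theorem Phi_Psi (z : hopfQ (presHom F A) × hopfQ (presHom F B) ×
    TensorProduct F (AbQuot F A) (AbQuot F B)) : Phi F A B (Psi F A B z) = z := by
  obtain ⟨m, n, t⟩ := z
  rw [Psi_apply]
  have hA : PhiA F A B (PsiA F A B m + (PsiB F A B n + Psi3 F A B t)) = m := by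
    rw [LinearMap.map_add, LinearMap.map_add, PhiA_PsiA, PhiA_PsiB, PhiA_Psi3, add_zero,
      add_zero]
  have hB : PhiB F A B (PsiA F A B m + (PsiB F A B n + Psi3 F A B t)) = n := by
    rw [LinearMap.map_add, LinearMap.map_add, PhiB_PsiA, PhiB_PsiB, PhiB_Psi3, add_zero,
      zero_add]
  have h3 : Phi3 F A B (PsiA F A B m + (PsiB F A B n + Psi3 F A B t)) = t := by
    rw [LinearMap.map_add, LinearMap.map_add, Phi3_PsiA, Phi3_PsiB, Phi3_Psi3, zero_add,
      zero_add]
  exact Prod.ext hA (Prod.ext hB h3)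

theorem Psi_bijective : Function.Bijective (Psi F A B) := by
  constructor
  · intro z z' h
    have := congrArg (Phi F A B) h
    rwa [Phi_Psi, Phi_Psi] at this
  · exact Psi_surjective F A B

noncomputable def dirEquiv : hopfQ (piE F A B) ≃ₗ[F] (hopfQ (presHom F A) ×
    hopfQ (presHom F B) × TensorProduct F (AbQuot F A) (AbQuot F B)) :=
  (LinearEquiv.ofBijective (Psi F A B) (Psi_bijective F A B)).symm

end DirectSumAux


/-- `M(A ⊕ B) ≅ M(A) ⊕ M(B) ⊕ (A^ab ⊗ B^ab)`. -/
theorem schur_multiplier_of_direct_sum (F : Type u) [Field F]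
    (A B : Type u) [LieRing A] [LieAlgebra F A] [LieRing B] [LieAlgebra F B] :
    Nonempty (Multiplier F (A × B) ≃ₗ[F]
      (Multiplier F A × Multiplier F B × TensorProduct F (AbQuot F A) (AbQuot F B))) := by
  obtain ⟨e1⟩ := hopf_nonempty_equiv (presHom F (A × B)) (piE F A B)
    (presHom_surj F (A × B)) (piE_surj F A B)
  exact ⟨e1.trans (dirEquiv F A B)⟩
end

section
/- If L is a finite-dimensional nilpotent Lie algebra of dimension n with dim L² = 1, then L is isomorphic to H(m) ⊕ A(n−2m−1) for some m ≥ 1, where H(m) is the Heisenberg Lie algebra of dimension 2m+1. -/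
open LieAlgebra Matrix Module


open LieAlgebra

open Matrix
open LieAlgebra

universe u v

section SymplecticAux
open Module

variable {F : Type*} [Field F]

lemma skew_of_alt {V : Type*} [AddCommGroup V] [Module F V] (B : V →ₗ[F] V →ₗ[F] F)
    (halt : ∀ x, B x x = 0) (x y : V) : B x y = - B y x := by
  have h := halt (x + y)
  simp only [map_add, LinearMap.add_apply, halt] at h
  linear_combination h

/-- symplectic-type decomposition for alternating forms -/
lemma exists_symplectic_aux (n : ℕ) :
    ∀ (V : Type u) [AddCommGroup V] [Module F V] [FiniteDimensional F V]
      (B : V →ₗ[F] V →ₗ[F] F), finrank F V ≤ n → (∀ x, B x x = 0) →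
      ∃ (m : ℕ) (e f : Fin m → V),
        (∀ i j, B (e i) (e j) = 0) ∧ (∀ i j, B (f i) (f j) = 0) ∧
        (∀ i j, B (e i) (f j) = if i = j then 1 else 0) ∧
        (∀ v : V, ∃ (a b : Fin m → F) (r : V), (∀ w, B r w = 0) ∧
          v = (∑ i, a i • e i) + (∑ i, b i • f i) + r) := by
  induction n with
  | zero =>
    intro V _ _ _ B hle _
    refine ⟨0, ![], ![], by simp, by simp, by simp, fun v => ⟨![], ![], v, fun w => ?_, by simp⟩⟩
    have : Subsingleton V := by
      have := finrank_zero_iff (R := F) (M := V) |>.mp (Nat.le_zero.mp hle)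
      infer_instance
    rw [Subsingleton.elim v 0]; simp
  | succ n ih =>
    intro V _ _ _ B hle halt
    by_cases hB : ∀ x y : V, B x y = 0
    · exact ⟨0, ![], ![], by simp, by simp, by simp,
        fun v => ⟨![], ![], v, fun w => hB v w, by simp⟩⟩
    push_neg at hB
    obtain ⟨x, y, hxy⟩ := hB
    set e : V := x with he
    set f : V := (B x y)⁻¹ • y with hf
    have hef : B e f = 1 := by
      simp only [hf, _root_.map_smul, smul_eq_mul]
      field_simp
      exact div_self hxy
    have hfe : B f e = -1 := by rw [skew_of_alt B halt, hef]
    set W : Submodule F V := LinearMap.ker (B e) ⊓ LinearMap.ker (B f) with hW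
    have memW : ∀ v : V, v ∈ W ↔ B e v = 0 ∧ B f v = 0 := by
      intro v; simp [hW, LinearMap.mem_ker]
    have heW : e ∉ W := by
      intro h
      have := ((memW e).mp h).2
      rw [hfe] at this; norm_num at this
    have hWlt : finrank F W < finrank F V := Submodule.finrank_lt (show W ≠ ⊤ from (by
      intro h; exact heW (h ▸ Submodule.mem_top)))
    have hWle : finrank F W ≤ n := by omega
    -- restricted form
    set B' : W →ₗ[F] W →ₗ[F] F := B.compl₁₂ W.subtype W.subtype with hB'
    have hB'app : ∀ v w : W, B' v w = B v w := fun v w => rfl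
    obtain ⟨m, e', f', hee, hff, hef', hdec⟩ := ih W B' hWle (fun v => halt v)
    refine ⟨m + 1, Fin.cons e (fun i => (e' i : V)), Fin.cons f (fun i => (f' i : V)), ?_, ?_, ?_, ?_⟩
    · intro i j
      refine Fin.cases ?_ (fun i => ?_) i <;> [skip; skip] <;>
        refine Fin.cases ?_ (fun j => ?_) j
      · simpa using halt e
      · simpa using ((memW _).mp (e' j).2).1
      · rw [Fin.cons_succ, Fin.cons_zero, skew_of_alt B halt]
        simp [((memW _).mp (e' i).2).1]
      · simpa [hB'app] using hee i j
    · intro i j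
      refine Fin.cases ?_ (fun i => ?_) i <;> [skip; skip] <;>
        refine Fin.cases ?_ (fun j => ?_) j
      · simpa using halt f
      · simpa using ((memW _).mp (f' j).2).2
      · rw [Fin.cons_succ, Fin.cons_zero, skew_of_alt B halt]
        simp [((memW _).mp (f' i).2).2]
      · simpa [hB'app] using hff i j
    · intro i j
      refine Fin.cases ?_ (fun i => ?_) i <;> [skip; skip] <;>
        refine Fin.cases ?_ (fun j => ?_) j
      · simpa using hef
      · simp [((memW _).mp (f' j).2).1, (Fin.succ_ne_zero j).symm]
      · rw [Fin.cons_succ, Fin.cons_zero, skew_of_alt B halt]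
        simp [((memW _).mp (e' i).2).2, Fin.succ_ne_zero i]
      · simpa [Fin.succ_inj, hB'app] using hef' i j
    · intro v
      set α : F := - B f v with hα
      set β : F := B e v with hβ
      have hv'W : v - α • e - β • f ∈ W := by
        rw [memW]
        constructor
        · simp [map_sub, _root_.map_smul, hef, halt e, hβ]
        · simp [map_sub, _root_.map_smul, hfe, halt f, hα]
      obtain ⟨a', b', r', hr', hsum⟩ := hdec ⟨v - α • e - β • f, hv'W⟩
      refine ⟨Fin.cons α a', Fin.cons β b', (r' : V), ?_, ?_⟩
      · intro w
        have hwW : w - (- B f w) • e - (B e w) • f ∈ W := by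
          rw [memW]
          constructor
          · simp [map_sub, _root_.map_smul, hef, halt e]
          · simp [map_sub, _root_.map_smul, hfe, halt f]
        have h1 : B (r' : V) e = 0 := by
          rw [skew_of_alt B halt]; simp [((memW _).mp r'.2).1]
        have h2 : B (r' : V) f = 0 := by
          rw [skew_of_alt B halt]; simp [((memW _).mp r'.2).2]
        have h3 := hr' ⟨_, hwW⟩
        rw [hB'app] at h3
        simp only [map_sub, _root_.map_smul, h1, h2, smul_zero, sub_zero] at h3
        exact h3
      · have hsum' : (v - α • e - β • f : V) = (∑ i, a' i • (e' i : V)) + (∑ i, b' i • (f' i : V)) + (r' : V) := by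
          have := congrArg (Submodule.subtype W) hsum
          simpa using this
        rw [Fin.sum_univ_succ, Fin.sum_univ_succ]
        simp only [Fin.cons_zero, Fin.cons_succ]
        have hv : v = α • e + β • f + ((∑ i, a' i • (e' i : V)) + (∑ i, b' i • (f' i : V)) + (r' : V)) := by
          rw [← hsum']; abel
        rw [hv]; abel

end SymplecticAux

/-- a nilpotent Lie algebra with one-dimensional derived subalgebra is
`H(m) ⊕ A(n-2m-1)`. -/
theorem nilpotent_dim_derived_one (F : Type u) [Field F]
    (L : Type u) [LieRing L] [LieAlgebra F L] [FiniteDimensional F L]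
    [LieRing.IsNilpotent L] (n : ℕ) (hn : Module.finrank F L = n)
    (hd : Module.finrank F ↥(derivedSeries F L 1) = 1) :
    ∃ m : ℕ, 1 ≤ m ∧ Nonempty (L ≃ₗ⁅F⁆ (Heis F m × AbLie F (n - 2 * m - 1))) := by

  classical
  obtain ⟨z₀, hz₀ne, hz₀span⟩ := finrank_eq_one_iff'.mp hd
  set z : L := (z₀ : L) with hzdef
  have hz : z ≠ 0 := fun h => hz₀ne (by exact Subtype.ext h)
  have hDz : ∀ w ∈ derivedSeries F L 1, ∃ c : F, c • z = w := by
    intro w hw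
    obtain ⟨c, hc⟩ := hz₀span ⟨w, hw⟩
    exact ⟨c, congrArg Subtype.val hc⟩
  have hbr : ∀ x y : L, ⁅x, y⁆ ∈ derivedSeries F L 1 := by
    intro x y
    rw [LieAlgebra.derivedSeries_def]
    rw [show (1 : ℕ) = 0 + 1 from rfl, LieAlgebra.derivedSeriesOfIdeal_succ,
      LieAlgebra.derivedSeriesOfIdeal_zero]
    exact LieSubmodule.lie_mem_lie (LieSubmodule.mem_top x) (LieSubmodule.mem_top y)
  -- the coordinate functional
  obtain ⟨φ, hφ⟩ := LinearMap.exists_leftInverse_of_injective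
    (LinearMap.toSpanSingleton F L z) (LinearMap.ker_toSpanSingleton F hz)
  have hφz : φ z = 1 := by
    have := congrFun (congrArg (DFunLike.coe) hφ) 1
    simpa using this
  -- the bilinear form
  set B : L →ₗ[F] L →ₗ[F] F :=
    (LinearMap.mk₂ F (fun x y : L => ⁅x, y⁆) add_lie smul_lie lie_add lie_smul).compr₂ φ with hBdef
  have hBapp : ∀ x y : L, B x y = φ ⁅x, y⁆ := fun _ _ => rfl
  have hBz : ∀ x y : L, (B x y) • z = ⁅x, y⁆ := by
    intro x y
    obtain ⟨c, hc⟩ := hDz ⁅x, y⁆ (hbr x y)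
    rw [hBapp, ← hc, _root_.map_smul, hφz, smul_eq_mul, mul_one]
  have halt : ∀ x : L, B x x = 0 := by
    intro x; rw [hBapp, lie_self, map_zero]
  -- z is central
  have hzc : ∀ x : L, ⁅x, z⁆ = 0 := by
    intro x
    obtain ⟨c, hc⟩ := hDz ⁅x, z⁆ (hbr x z)
    have hpow : ∀ j : ℕ, ((LieModule.toEnd F L L x) ^ j) z = c ^ j • z := by
      intro j
      induction j with
      | zero => simp
      | succ j ihj =>
        rw [pow_succ', Module.End.mul_apply, ihj, _root_.map_smul,
          LieModule.toEnd_apply_apply, ← hc, smul_smul, ← pow_succ]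
    obtain ⟨N, hN⟩ := LieModule.isNilpotent_toEnd_of_isNilpotent F L L x
    have hcN : c ^ N • z = 0 := by rw [← hpow N, hN]; rfl
    have : c ^ N = 0 := by
      rcases smul_eq_zero.mp hcN with h | h
      · exact h
      · exact absurd h hz
    have hc0 : c = 0 := (pow_eq_zero_iff'.mp this).1
    rw [← hc, hc0, zero_smul]
  have hzc' : ∀ x : L, ⁅z, x⁆ = 0 := fun x => by rw [← lie_skew, hzc x, neg_zero]
  -- the center (as a submodule)
  set Rc : Submodule F L :=
    { carrier := {r : L | ∀ w : L, ⁅r, w⁆ = 0}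
      add_mem' := fun ha hb w => by rw [add_lie, ha w, hb w, add_zero]
      zero_mem' := fun w => zero_lie w
      smul_mem' := fun c a ha w => by rw [smul_lie, ha w, smul_zero] } with hRcdef
  have hmemRc : ∀ r : L, r ∈ Rc ↔ ∀ w : L, ⁅r, w⁆ = 0 := fun r => Iff.rfl
  have hzR : z ∈ Rc := hzc'
  -- apply the symplectic decomposition
  obtain ⟨m, e, f, hee, hff, hef, hdec⟩ :=
    exists_symplectic_aux (Module.finrank F L) L B le_rfl halt
  have hradR : ∀ r : L, (∀ w : L, B r w = 0) → r ∈ Rc := by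
    intro r h w
    rw [← hBz r w, h w, zero_smul]
  have hBR : ∀ r ∈ Rc, ∀ w : L, B r w = 0 := by
    intro r hr w
    rw [hBapp, hr w, map_zero]
  have hBR' : ∀ (w : L), ∀ r ∈ Rc, B w r = 0 := by
    intro w r hr
    rw [skew_of_alt B halt, hBR r hr w, neg_zero]
  -- m ≥ 1
  have hm : 1 ≤ m := by
    by_contra hcon
    have hm0 : m = 0 := by omega
    subst hm0
    have hab : ∀ x y : L, ⁅x, y⁆ = 0 := by
      intro x y
      obtain ⟨a, b, r, hrrad, hv⟩ := hdec x
      have hx : x = r := by simpa using hv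
      rw [hx, ← hBz, hrrad y, zero_smul]
    have : IsLieAbelian L := ⟨hab⟩
    have hbot : derivedSeries F L 1 = ⊥ := by
      rw [LieAlgebra.derivedSeries_def, ← LieAlgebra.abelian_iff_derived_one_eq_bot,
        lie_abelian_iff_equiv_lie_abelian LieIdeal.topEquiv]
      infer_instance
    rw [hbot] at hd
    have : Subsingleton (↥(⊥ : LieIdeal F L)) := by
      constructor
      rintro ⟨a, ha⟩ ⟨b, hb⟩
      rw [LieSubmodule.mem_bot] at ha hb
      simp [ha, hb]
    rw [finrank_zero_of_subsingleton] at hd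
    exact absurd hd (by norm_num)
  -- complement of the line spanned by z inside the center
  obtain ⟨C, hC⟩ := Submodule.exists_isCompl (Submodule.span F {(⟨z, hzR⟩ : ↥Rc)})
  set k : ℕ := Module.finrank F ↥C with hkdef
  set c : Basis (Fin k) F ↥C := Module.finBasis F ↥C with hcdef
  set cL : Fin k → L := fun j => ((c j : ↥Rc) : L) with hcLdef
  have hcR : ∀ j, cL j ∈ Rc := fun j => ((c j : ↥Rc)).2
  -- the linear map from Heis × Ab to L
  set gfun : Heis F m × AbLie F k → L := fun p =>
    (∑ i, p.1.1 i • e i) + (∑ i, p.1.2.1 i • f i) + p.1.2.2 • z + ∑ j, p.2 j • cL j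
    with hgfun
  have hBzw : ∀ w : L, B z w = 0 := fun w => hBR z hzR w
  have hBcL : ∀ (j : Fin k) (w : L), B (cL j) w = 0 := fun j w => hBR _ (hcR j) w
  have hBwz : ∀ w : L, B w z = 0 := fun w => hBR' w z hzR
  have hBwcL : ∀ (w : L) (j : Fin k), B w (cL j) = 0 := fun w j => hBR' w _ (hcR j)
  -- pairing of B with g
  have hBg1 : ∀ (p : Heis F m × AbLie F k) (w : L),
      B (gfun p) w = (∑ i, p.1.1 i * B (e i) w) + ∑ i, p.1.2.1 i * B (f i) w := by
    intro p w
    rw [hgfun]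
    simp only [map_add, map_sum, _root_.map_smul, LinearMap.add_apply, LinearMap.sum_apply,
      LinearMap.smul_apply, smul_eq_mul, hBzw, hBcL, mul_zero, Finset.sum_const_zero, add_zero]
  have hBg2 : ∀ (w : L) (p : Heis F m × AbLie F k),
      B w (gfun p) = (∑ i, p.1.1 i * B w (e i)) + ∑ i, p.1.2.1 i * B w (f i) := by
    intro w p
    rw [hgfun]
    simp only [map_add, map_sum, _root_.map_smul, smul_eq_mul, hBwz, hBwcL, mul_zero,
      Finset.sum_const_zero, add_zero]
  have hgef : ∀ (p : Heis F m × AbLie F k) (j : Fin m), B (gfun p) (f j) = p.1.1 j := by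
    intro p j
    rw [hBg1]
    simp [hef, hff, mul_ite, Finset.sum_ite_eq']
  have hgee : ∀ (p : Heis F m × AbLie F k) (j : Fin m), B (e j) (gfun p) = p.1.2.1 j := by
    intro p j
    rw [hBg2]
    simp [hef, hee, mul_ite, Finset.sum_ite_eq]
  have hgfe : ∀ (p : Heis F m × AbLie F k) (j : Fin m), B (f j) (gfun p) = - p.1.1 j := by
    intro p j
    rw [skew_of_alt B halt, hgef]
  have hBgg : ∀ p q : Heis F m × AbLie F k,
      B (gfun p) (gfun q) = (∑ i, p.1.1 i * q.1.2.1 i) - ∑ i, q.1.1 i * p.1.2.1 i := by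
    intro p q
    rw [hBg1]
    have h1 : ∀ i : Fin m, B (e i) (gfun q) = q.1.2.1 i := fun i => hgee q i
    have h2 : ∀ i : Fin m, B (f i) (gfun q) = - q.1.1 i := fun i => hgfe q i
    simp only [h1, h2]
    have h3 : ∀ i : Fin m, p.1.2.1 i * -q.1.1 i = -(q.1.1 i * p.1.2.1 i) := fun i => by ring
    simp only [h3, Finset.sum_neg_distrib, sub_eq_add_neg]
  -- the bracket is preserved
  have hmaplie : ∀ p q : Heis F m × AbLie F k, gfun ⁅p, q⁆ = ⁅gfun p, gfun q⁆ := by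
    intro p q
    rw [← hBz (gfun p) (gfun q), hBgg]
    rw [hgfun]
    show (∑ i, (0:F) • e i) + (∑ i, (0:F) • f i) +
      (p.1.1 ⬝ᵥ q.1.2.1 - q.1.1 ⬝ᵥ p.1.2.1) • z + (∑ j, (0:F) • cL j) = _
    simp [dotProduct]
  have hadd : ∀ p q : Heis F m × AbLie F k, gfun (p + q) = gfun p + gfun q := by
    intro p q
    rw [hgfun]
    show (∑ i, (p.1.1 i + q.1.1 i) • e i) + (∑ i, (p.1.2.1 i + q.1.2.1 i) • f i) +
        (p.1.2.2 + q.1.2.2) • z + (∑ j, (p.2 j + q.2 j) • cL j) =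
      ((∑ i, p.1.1 i • e i) + (∑ i, p.1.2.1 i • f i) + p.1.2.2 • z + ∑ j, p.2 j • cL j) +
      ((∑ i, q.1.1 i • e i) + (∑ i, q.1.2.1 i • f i) + q.1.2.2 • z + ∑ j, q.2 j • cL j)
    simp only [add_smul, Finset.sum_add_distrib]
    abel
  have hsmul : ∀ (t : F) (p : Heis F m × AbLie F k), gfun (t • p) = t • gfun p := by
    intro t p
    rw [hgfun]
    show (∑ i, (t * p.1.1 i) • e i) + (∑ i, (t * p.1.2.1 i) • f i) +
        (t * p.1.2.2) • z + (∑ j, (t * p.2 j) • cL j) =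
      t • ((∑ i, p.1.1 i • e i) + (∑ i, p.1.2.1 i • f i) + p.1.2.2 • z + ∑ j, p.2 j • cL j)
    simp only [mul_smul, smul_add, Finset.smul_sum]
  let gLie : (Heis F m × AbLie F k) →ₗ⁅F⁆ L :=
    LieHom.mk ⟨⟨gfun, fun p q => hadd p q⟩, fun t p => hsmul t p⟩
      (fun {x y} => hmaplie x y)
  have hgapp : ∀ p, gLie.toLinearMap p = gfun p := fun p => rfl
  -- injectivity
  have hginj : Function.Injective gLie.toLinearMap := by
    rw [← LinearMap.ker_eq_bot]
    apply LinearMap.ker_eq_bot'.mpr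
    intro p hp
    obtain ⟨⟨pa, pb, pt⟩, pu⟩ := p
    have hp' : gfun ((pa, pb, pt), pu) = 0 := by rw [← hgapp]; exact hp
    have ha : ∀ j, pa j = 0 := by
      intro j
      have h := hgef ((pa, pb, pt), pu) j
      rw [hp'] at h
      simpa using h.symm
    have hb : ∀ j, pb j = 0 := by
      intro j
      have h := hgee ((pa, pb, pt), pu) j
      rw [hp'] at h
      simpa using h.symm
    have hrest : pt • z + ∑ j, pu j • cL j = 0 := by
      have h := hp'
      rw [hgfun] at h
      simp only [ha, hb, zero_smul, Finset.sum_const_zero, zero_add] at h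
      exact h
    -- move into the center submodule
    have hx2mem : (∑ j, pu j • ((c j : ↥Rc)) : ↥Rc) ∈ C :=
      Submodule.sum_mem _ (fun j _ => Submodule.smul_mem _ _ (c j).2)
    have hsum0 : (pt • (⟨z, hzR⟩ : ↥Rc) + ∑ j, pu j • ((c j : ↥Rc)) : ↥Rc) = 0 := by
      have hcoe : ((pt • (⟨z, hzR⟩ : ↥Rc) + ∑ j, pu j • ((c j : ↥Rc)) : ↥Rc) : L)
          = pt • z + ∑ j, pu j • cL j := by
        push_cast
        rfl
      exact Subtype.ext (by rw [hcoe, hrest]; rfl)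
    have hx1mem : pt • (⟨z, hzR⟩ : ↥Rc) ∈ Submodule.span F {(⟨z, hzR⟩ : ↥Rc)} :=
      Submodule.smul_mem _ _ (Submodule.mem_span_singleton_self _)
    have hx1C : pt • (⟨z, hzR⟩ : ↥Rc) ∈ C := by
      have : pt • (⟨z, hzR⟩ : ↥Rc) = - ∑ j, pu j • ((c j : ↥Rc)) := by
        rw [eq_neg_iff_add_eq_zero]
        exact hsum0
      rw [this]
      exact Submodule.neg_mem _ hx2mem
    have hx10 : pt • (⟨z, hzR⟩ : ↥Rc) = 0 :=
      Submodule.disjoint_def.mp hC.disjoint _ hx1mem hx1C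
    have hpt : pt = 0 := by
      rcases smul_eq_zero.mp hx10 with h | h
      · exact h
      · exact absurd (congrArg Subtype.val h) hz
    have hx20 : (∑ j, pu j • ((c j : ↥Rc)) : ↥Rc) = 0 := by
      have h := hsum0
      rw [hx10, zero_add] at h
      exact h
    have hsumC : (∑ j, pu j • c j : ↥C) = 0 := by
      apply Subtype.ext
      have : ((∑ j, pu j • c j : ↥C) : ↥Rc) = ∑ j, pu j • ((c j : ↥Rc)) := by push_cast; rfl
      rw [this, hx20]
      rfl
    have hpu : ∀ j, pu j = 0 :=
      Fintype.linearIndependent_iff.mp c.linearIndependent pu hsumC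
    have hpa : pa = 0 := funext ha
    have hpb : pb = 0 := funext hb
    have hpu' : pu = 0 := funext hpu
    rw [hpa, hpb, hpt, hpu']
    rfl
  -- surjectivity
  have hgsurj : Function.Surjective gLie.toLinearMap := by
    intro v
    obtain ⟨a, b, r, hrrad, hv⟩ := hdec v
    have hrR : r ∈ Rc := hradR r hrrad
    have hrmem : (⟨r, hrR⟩ : ↥Rc) ∈ (Submodule.span F {(⟨z, hzR⟩ : ↥Rc)} ⊔ C) := by
      rw [hC.sup_eq_top]
      trivial
    obtain ⟨y1, hy1, y2, hy2, hsum⟩ := Submodule.mem_sup.mp hrmem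
    obtain ⟨t, ht⟩ := Submodule.mem_span_singleton.mp hy1
    refine ⟨((a, b, t), fun j => c.repr ⟨y2, hy2⟩ j), ?_⟩
    rw [hgapp, hgfun]
    show (∑ i, a i • e i) + (∑ i, b i • f i) + t • z + ∑ j, (c.repr ⟨y2, hy2⟩ j) • cL j = v
    have hy2eq : y2 = ∑ j, (c.repr ⟨y2, hy2⟩ j) • ((c j : ↥Rc)) := by
      have h : ((∑ j, (c.repr ⟨y2, hy2⟩ j) • c j : ↥C) : ↥Rc) = y2 :=
        congrArg (fun (w : ↥C) => (w : ↥Rc)) (c.sum_repr ⟨y2, hy2⟩)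
      conv_lhs => rw [← h]
      push_cast
      rfl
    have hr : r = t • z + ∑ j, (c.repr ⟨y2, hy2⟩ j) • cL j := by
      have h : (y1 : L) + (y2 : L) = r := congrArg (Subtype.val (p := fun x => x ∈ Rc)) hsum
      have hy1' : (y1 : L) = t • z := by rw [← ht]; rfl
      have hy2' : (y2 : L) = ∑ j, (c.repr ⟨y2, hy2⟩ j) • cL j := by
        have h2 := congrArg (Subtype.val (p := fun x => x ∈ Rc)) hy2eq
        rw [h2]
        push_cast
        rfl
      rw [hy1', hy2'] at h
      exact h.symm
    rw [hv, hr]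
    abel
  -- build the Lie algebra equivalence
  let E : (Heis F m × AbLie F k) ≃ₗ[F] L := LinearEquiv.ofBijective gLie.toLinearMap ⟨hginj, hgsurj⟩
  let EL : (Heis F m × AbLie F k) ≃ₗ⁅F⁆ L :=
    { gLie with invFun := E.symm, left_inv := E.left_inv, right_inv := E.right_inv }
  -- dimension count
  have h1 : Module.finrank F (Heis F m) = 2 * m + 1 := by
    show Module.finrank F ((Fin m → F) × (Fin m → F) × F) = 2 * m + 1
    simp only [Module.finrank_prod, Module.finrank_pi, Module.finrank_self, Fintype.card_fin]
    omega
  have h2 : Module.finrank F (AbLie F k) = k := by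
    show Module.finrank F (Fin k → F) = k
    simp [Module.finrank_pi]
  have hk : n - 2 * m - 1 = k := by
    have h3 : Module.finrank F L = 2 * m + 1 + k := by
      rw [← E.finrank_eq, Module.finrank_prod, h1, h2]
    omega
  refine ⟨m, hm, ?_⟩
  rw [show n - 2 * m - 1 = k from hk]
  exact ⟨EL.symm⟩
end
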